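/- arXiv:2508.15271 — 8 statements merged into one kernel-verified Lean document; each statement's English description precedes it below -/
import Mathlib

section
/- Motzkin–Straus inequality: let r ≥ 2 and let G be a K_{r+1}-free graph on n vertices. If x = (x_1,…,x_n) is a nonnegative real vector with Σ x_i = 1, then Σ_{ij ∈ E(G)} x_i x_j ≤ (1/2)(1 − 1/r). -/
open Finset Matrix

namespace MSaux

variable {V : Type*} [Fintype V] [DecidableEq V] (G : SimpleGraph V) [DecidableRel G.Adj]

lemma dart_sum (f : V → V → ℝ) :
    ∑ d : G.Dart, f d.toProd.1 d.toProd.2 = ∑ u, ∑ v, if G.Adj u v then f u v else 0 := by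
  rw [← Finset.sum_product', ← Finset.sum_filter]
  refine Finset.sum_bij' (fun d _ => (d.toProd.1, d.toProd.2))
    (fun p hp => ⟨p, (Finset.mem_filter.1 hp).2⟩) ?_ ?_ ?_ ?_ ?_ <;> simp

lemma quad_eq_double_sum (x : V → ℝ) :
    x ⬝ᵥ (G.adjMatrix ℝ *ᵥ x) = ∑ u, ∑ v, if G.Adj u v then x u * x v else 0 := by
  simp only [dotProduct, mulVec, SimpleGraph.adjMatrix_apply, Finset.mul_sum, mul_ite,
    ite_mul, one_mul, mul_zero, zero_mul, mul_one]

lemma two_mul_edge_sum (x : V → ℝ) :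
    2 * ∑ e ∈ G.edgeFinset,
        Sym2.lift ⟨fun u v => x u * x v, fun u v => mul_comm (x u) (x v)⟩ e
      = x ⬝ᵥ (G.adjMatrix ℝ *ᵥ x) := by
  rw [quad_eq_double_sum, ← dart_sum]
  have h := (Finset.sum_fiberwise_of_maps_to
    (s := (Finset.univ : Finset G.Dart)) (g := SimpleGraph.Dart.edge) (t := G.edgeFinset)
    (fun d _ => by rw [SimpleGraph.mem_edgeFinset]; exact d.edge_mem)
    (fun d => x d.toProd.1 * x d.toProd.2))
  rw [← h, Finset.mul_sum]
  refine Finset.sum_congr rfl fun e he => ?_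
  have he' : e ∈ G.edgeSet := SimpleGraph.mem_edgeFinset.1 he
  have hconst : ∀ d ∈ Finset.univ.filter (fun d : G.Dart => d.edge = e),
      x d.toProd.1 * x d.toProd.2
        = Sym2.lift ⟨fun u v => x u * x v, fun u v => mul_comm (x u) (x v)⟩ e := by
    intro d hd
    have hd' : d.edge = e := (Finset.mem_filter.1 hd).2
    rw [← hd', SimpleGraph.Dart.edge, Sym2.lift_mk]
  rw [Finset.sum_congr rfl hconst, Finset.sum_const]
  have hcard : (Finset.univ.filter (fun d : G.Dart => d.edge = e)).card = 2 := by
    have := G.dart_edge_fiber_card e he'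
    convert this using 2
  rw [hcard]
  simp [mul_comm]

lemma step (x : V → ℝ) (u v : V) (hne : u ≠ v) (hnadj : ¬ G.Adj u v)
    (hx0 : ∀ w, 0 ≤ x w) (hu : x u ≠ 0) (hv : x v ≠ 0)
    (hW : (G.adjMatrix ℝ *ᵥ x) v ≤ (G.adjMatrix ℝ *ᵥ x) u) :
    ∃ y : V → ℝ, (∀ w, 0 ≤ y w) ∧ (∑ w, y w = ∑ w, x w) ∧
      #(Finset.univ.filter fun w => y w ≠ 0) < #(Finset.univ.filter fun w => x w ≠ 0) ∧
      x ⬝ᵥ (G.adjMatrix ℝ *ᵥ x) ≤ y ⬝ᵥ (G.adjMatrix ℝ *ᵥ y) := by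
  set A := G.adjMatrix ℝ with hA
  have hsymA : ∀ i j, A i j = A j i := fun i j => by
    simp [hA, SimpleGraph.adjMatrix_apply, G.adj_comm]
  set z : V → ℝ := fun w => (if w = u then x v else 0) - (if w = v then x v else 0) with hz
  have hzw : ∀ w, z w = (if w = u then x v else 0) - (if w = v then x v else 0) := by
    intro w; rw [hz]
  have hyw : ∀ w, (x + z) w = if w = v then 0 else if w = u then x u + x v else x w := by
    intro w
    by_cases h1 : w = v
    · rw [h1]
      have hvu : (v = u) = False := by simp [Ne.symm hne]
      simp [hzw, hvu]
    · by_cases h2 : w = u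
      · rw [h2]
        simp [hzw, hne, Ne.symm hne]
      · simp [hzw, h1, h2]
  have hupos : 0 < x u := lt_of_le_of_ne (hx0 u) (Ne.symm hu)
  have hvpos : 0 < x v := lt_of_le_of_ne (hx0 v) (Ne.symm hv)
  refine ⟨x + z, ?_, ?_, ?_, ?_⟩
  · intro w
    rw [hyw]
    split_ifs with h1 h2
    · exact le_rfl
    · positivity
    · exact hx0 w
  · have : ∑ w, z w = 0 := by
      simp [hzw, Finset.sum_sub_distrib, Finset.sum_ite_eq']
    simp [Finset.sum_add_distrib, this]
  · have hset : (Finset.univ.filter fun w => (x + z) w ≠ 0)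
        = (Finset.univ.filter fun w => x w ≠ 0).erase v := by
      ext w
      simp only [Finset.mem_erase, Finset.mem_filter, Finset.mem_univ, true_and]
      rw [hyw]
      by_cases h1 : w = v
      · rw [h1]; simp
      · by_cases h2 : w = u
        · rw [h2]
          have : x u + x v ≠ 0 := by positivity
          simp [h1, h2, hne, this, hu]
        · simp [h1, h2]
    rw [hset]
    exact Finset.card_erase_lt_of_mem (by simp [hv])
  · have hexp : (x + z) ⬝ᵥ A *ᵥ (x + z)
        = x ⬝ᵥ A *ᵥ x + x ⬝ᵥ A *ᵥ z + z ⬝ᵥ A *ᵥ x + z ⬝ᵥ A *ᵥ z := by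
      simp only [mulVec_add, dotProduct_add, add_dotProduct]
      ring
    have hdotcol : ∀ w : V, x ⬝ᵥ (fun i => A i w) = (A *ᵥ x) w := by
      intro w
      simp [dotProduct, mulVec, hsymA, mul_comm]
    have hAz : A *ᵥ z = fun i => x v * A i u - x v * A i v := by
      funext i
      simp only [mulVec, dotProduct, hzw, mul_sub, mul_ite, mul_zero,
        Finset.sum_sub_distrib, Finset.sum_ite_eq', Finset.mem_univ, if_true]
      ring
    have hxAz : x ⬝ᵥ A *ᵥ z = x v * ((A *ᵥ x) u - (A *ᵥ x) v) := by
      rw [hAz]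
      have : (fun i => x v * A i u - x v * A i v)
          = (x v • (fun i => A i u) - x v • (fun i => A i v)) := by
        funext i; simp
      rw [this, dotProduct_sub, dotProduct_smul, dotProduct_smul, hdotcol, hdotcol]
      simp [mul_sub]
    have hzdot : ∀ w' : V → ℝ, z ⬝ᵥ w' = x v * w' u - x v * w' v := by
      intro w'
      simp [dotProduct, hzw, sub_mul, ite_mul, Finset.sum_sub_distrib,
        Finset.sum_ite_eq']
    have hzAx : z ⬝ᵥ A *ᵥ x = x v * ((A *ᵥ x) u - (A *ᵥ x) v) := by
      rw [hzdot]; ring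
    have hAuu : A u u = 0 := by simp [hA]
    have hAvv : A v v = 0 := by simp [hA]
    have hAuv : A u v = 0 := by simp [hA, hnadj]
    have hAvu : A v u = 0 := (hsymA v u).trans hAuv
    have hzAz : z ⬝ᵥ A *ᵥ z = 0 := by
      rw [hzdot, hAz]
      simp [hAuu, hAvv, hAuv, hAvu]
    rw [hexp, hxAz, hzAx, hzAz]
    nlinarith [hvpos, sub_nonneg.2 hW]

lemma key (r : ℕ) (hr : 1 ≤ r) (hG : G.CliqueFree (r + 1)) :
    ∀ (n : ℕ) (x : V → ℝ), (∀ v, 0 ≤ x v) → ∑ v, x v = 1 →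
      #(Finset.univ.filter fun v => x v ≠ 0) ≤ n →
      x ⬝ᵥ (G.adjMatrix ℝ *ᵥ x) ≤ 1 - 1 / (r : ℝ) := by
  intro n
  induction n with
  | zero =>
    intro x hx0 hx1 hcard
    exfalso
    have hz : ∀ v, x v = 0 := by
      intro v
      by_contra h
      have hv : v ∈ Finset.univ.filter fun v => x v ≠ 0 := by simp [h]
      have := Finset.card_pos.2 ⟨v, hv⟩
      omega
    simp [hz] at hx1
  | succ n ih =>
    intro x hx0 hx1 hcard
    by_cases hcl : ∀ u v, x u ≠ 0 → x v ≠ 0 → u ≠ v → G.Adj u v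
    · -- support is a clique
      set S := Finset.univ.filter fun v => x v ≠ 0 with hS
      have hScard : S.card ≤ r := by
        by_contra h
        push_neg at h
        obtain ⟨T, hTS, hTcard⟩ := Finset.exists_subset_card_eq (Nat.succ_le_of_lt h)
        refine hG T ⟨?_, hTcard⟩
        intro a ha b hb hab
        have ha' : x a ≠ 0 := (Finset.mem_filter.1 (hTS ha)).2
        have hb' : x b ≠ 0 := (Finset.mem_filter.1 (hTS hb)).2
        exact hcl a b ha' hb' hab
      have hsumS : ∑ w ∈ S, x w = 1 := by
        rw [← hx1]
        exact Finset.sum_subset (Finset.subset_univ S)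
          (fun w _ hw => by simpa [hS] using hw)
      have hSpos : 0 < S.card := by
        rcases Finset.eq_empty_or_nonempty S with h | h
        · rw [h] at hsumS; simp at hsumS
        · exact Finset.card_pos.2 h
      have hQ : x ⬝ᵥ (G.adjMatrix ℝ *ᵥ x)
          = ∑ p ∈ S, ∑ q ∈ S, if G.Adj p q then x p * x q else 0 := by
        rw [quad_eq_double_sum]
        rw [← Finset.sum_subset (Finset.subset_univ S) (fun p _ hp => ?_)]
        · refine Finset.sum_congr rfl fun p _ => ?_
          symm
          refine Finset.sum_subset (Finset.subset_univ S) (fun q _ hq => ?_)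
          have : x q = 0 := by simpa [hS] using hq
          simp [this]
        · have : x p = 0 := by simpa [hS] using hp
          exact Finset.sum_eq_zero fun q _ => by simp [this]
      have hbound : ∑ p ∈ S, ∑ q ∈ S, (if G.Adj p q then x p * x q else 0)
          ≤ ∑ p ∈ S, x p * (1 - x p) := by
        refine Finset.sum_le_sum fun p hp => ?_
        have h1 : ∑ q ∈ S, (if G.Adj p q then x p * x q else 0)
            = ∑ q ∈ S.erase p, (if G.Adj p q then x p * x q else 0) :=
          (Finset.sum_erase _ (by simp)).symm
        rw [h1]
        have h2 : ∑ q ∈ S.erase p, (if G.Adj p q then x p * x q else 0)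
            ≤ ∑ q ∈ S.erase p, x p * x q := by
          refine Finset.sum_le_sum fun q _ => ?_
          split_ifs
          · exact le_rfl
          · exact mul_nonneg (hx0 p) (hx0 q)
        have h3 : ∑ q ∈ S.erase p, x p * x q = x p * (1 - x p) := by
          rw [← Finset.mul_sum, Finset.sum_erase_eq_sub hp, hsumS]
        linarith
      have hsq : (1 : ℝ) ≤ (S.card : ℝ) * ∑ p ∈ S, x p ^ 2 := by
        have := sq_sum_le_card_mul_sum_sq (s := S) (f := x)
        rw [hsumS] at this
        simpa using this
      have hcardr : (1 : ℝ) / r ≤ ∑ p ∈ S, x p ^ 2 := by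
        have hc0 : (0 : ℝ) < S.card := by exact_mod_cast hSpos
        have hr0 : (0 : ℝ) < r := by positivity
        have h1 : (1 : ℝ) / S.card ≤ ∑ p ∈ S, x p ^ 2 := by
          rw [div_le_iff₀ hc0]
          nlinarith
        have h2 : (1 : ℝ) / r ≤ 1 / S.card := by
          apply one_div_le_one_div_of_le hc0
          exact_mod_cast hScard
        linarith
      have hfin : ∑ p ∈ S, x p * (1 - x p) = 1 - ∑ p ∈ S, x p ^ 2 := by
        have he : ∀ p ∈ S, x p * (1 - x p) = x p - x p ^ 2 := fun p _ => by ring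
        rw [Finset.sum_congr rfl he, Finset.sum_sub_distrib, hsumS]
      rw [hQ]
      linarith
    · push_neg at hcl
      obtain ⟨u, v, hu, hv, hne, hnadj⟩ := hcl
      rcases le_total ((G.adjMatrix ℝ *ᵥ x) v) ((G.adjMatrix ℝ *ᵥ x) u) with h | h
      · obtain ⟨y, hy0, hy1, hyc, hQle⟩ := step G x u v hne hnadj hx0 hu hv h
        exact hQle.trans (ih y hy0 (by rw [hy1, hx1]) (by omega))
      · obtain ⟨y, hy0, hy1, hyc, hQle⟩ :=
          step G x v u hne.symm (fun h' => hnadj h'.symm) hx0 hv hu h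
        exact hQle.trans (ih y hy0 (by rw [hy1, hx1]) (by omega))

end MSaux

/-- `lam` is the largest adjacency eigenvalue (spectral radius) of `G`. -/
def IsSpectralRadius {V : Type*} [Fintype V] [DecidableEq V] (G : SimpleGraph V)
    [DecidableRel G.Adj] (lam : ℝ) : Prop :=
  (∃ x : V → ℝ, x ≠ 0 ∧ (G.adjMatrix ℝ) *ᵥ x = lam • x) ∧
  ∀ μ : ℝ, (∃ x : V → ℝ, x ≠ 0 ∧ (G.adjMatrix ℝ) *ᵥ x = μ • x) → μ ≤ lam

/-- Motzkin–Straus inequality for `K_{r+1}`-free graphs. -/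
theorem stmt_6 {V : Type*} [Fintype V] [DecidableEq V] (G : SimpleGraph V)
    [DecidableRel G.Adj] (r : ℕ) (hr : 2 ≤ r) (hG : G.CliqueFree (r + 1))
    (x : V → ℝ) (hx0 : ∀ v, 0 ≤ x v) (hx1 : ∑ v, x v = 1) :
    ∑ e ∈ G.edgeFinset,
        Sym2.lift ⟨fun u v => x u * x v, fun u v => mul_comm (x u) (x v)⟩ e
      ≤ 1 / 2 * (1 - 1 / (r : ℝ)) := by
  have hb := MSaux.key G r (by omega) hG (#(Finset.univ.filter fun v => x v ≠ 0))
    x hx0 hx1 le_rfl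
  have hbridge := MSaux.two_mul_edge_sum G x
  linarith
end

section
/- Nikiforov's edge bound: if r ≥ 2 and G is a K_{r+1}-free graph with m edges, then λ(G)² ≤ (1 − 1/r)·2m. -/
open Finset Matrix
set_option linter.unusedSectionVars false
set_option maxHeartbeats 1000000

section NikAux

variable {V : Type*} [Fintype V] [DecidableEq V] (G : SimpleGraph V) [DecidableRel G.Adj]

lemma nik_symmdot (z : V → ℝ) (w : V) :
    (z ⬝ᵥ fun i => G.adjMatrix ℝ i w) = (G.adjMatrix ℝ *ᵥ z) w := by
  simp only [dotProduct, mulVec, SimpleGraph.adjMatrix_apply]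
  refine Finset.sum_congr rfl fun i _ => ?_
  have : (if G.Adj i w then (1:ℝ) else 0) = if G.Adj w i then 1 else 0 := by
    simp only [G.adj_comm]
  rw [this, mul_comm]

lemma nik_shift (z : V → ℝ) (u v : V) (c : ℝ) (huv : ¬ G.Adj u v) :
    (z + c • (Pi.single v 1 - Pi.single u 1)) ⬝ᵥ
      (G.adjMatrix ℝ *ᵥ (z + c • (Pi.single v 1 - Pi.single u 1)))
      = z ⬝ᵥ (G.adjMatrix ℝ *ᵥ z)
        + 2 * c * ((G.adjMatrix ℝ *ᵥ z) v - (G.adjMatrix ℝ *ᵥ z) u) := by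
  have hvu : ¬ G.Adj v u := fun h => huv h.symm
  set A := G.adjMatrix ℝ with hA
  set d : V → ℝ := c • (Pi.single v 1 - Pi.single u 1) with hd
  have hAd : A *ᵥ d = c • ((fun i => A i v) - fun i => A i u) := by
    rw [hd, mulVec_smul, mulVec_sub]
    congr 1
    rw [mulVec_single_one, mulVec_single_one]
    rfl
  have h1 : z ⬝ᵥ (A *ᵥ d) = c * ((A *ᵥ z) v - (A *ᵥ z) u) := by
    rw [hAd, dotProduct_smul, smul_eq_mul]
    congr 1
    rw [dotProduct_sub, nik_symmdot, nik_symmdot]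
  have h2 : d ⬝ᵥ (A *ᵥ z) = c * ((A *ᵥ z) v - (A *ᵥ z) u) := by
    rw [hd, smul_dotProduct, sub_dotProduct, single_dotProduct, single_dotProduct]
    simp
  have h3 : d ⬝ᵥ (A *ᵥ d) = 0 := by
    rw [hd, smul_dotProduct, sub_dotProduct, single_dotProduct, single_dotProduct, hAd]
    simp only [Pi.smul_apply, Pi.sub_apply, smul_eq_mul]
    have hAvv : A v v = 0 := by simp [hA]
    have hAuu : A u u = 0 := by simp [hA]
    have hAvu : A v u = 0 := by simp [hA, hvu]
    have hAuv : A u v = 0 := by simp [hA, huv]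
    rw [hAvv, hAuu, hAvu, hAuv]; ring
  rw [mulVec_add, dotProduct_add, add_dotProduct, add_dotProduct, h1, h2, h3]
  ring


lemma nik_clique_card {r : ℕ} (hG : G.CliqueFree (r+1)) {s : Finset V}
    (hs : G.IsClique ↑s) : s.card ≤ r := by
  by_contra h
  push_neg at h
  obtain ⟨t, hts, htcard⟩ := Finset.exists_subset_card_eq h -- name?
  exact hG t ⟨hs.subset (by exact_mod_cast hts), htcard⟩

lemma nik_ms {r : ℕ} (hr : 1 ≤ r) (hG : G.CliqueFree (r+1)) :
    ∀ (n : ℕ) (z : V → ℝ), (∀ w, 0 ≤ z w) → ∑ w, z w = 1 →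
      (univ.filter fun w => z w ≠ 0).card ≤ n →
      z ⬝ᵥ (G.adjMatrix ℝ *ᵥ z) ≤ 1 - 1/(r:ℝ) := by
  intro n
  induction n with
  | zero =>
    intro z hz hsum hcard
    exfalso
    have : (univ.filter fun w => z w ≠ 0) = ∅ := Finset.card_eq_zero.mp (Nat.le_zero.mp hcard)
    have hzz : ∀ w, z w = 0 := by
      intro w
      by_contra hw
      exact (Finset.eq_empty_iff_forall_notMem.mp this w) (by simp [hw])
    simp [hzz] at hsum
  | succ n ih =>
    intro z hz hsum hcard
    set s := univ.filter fun w => z w ≠ 0 with hsdef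
    have hsum_s : ∑ w ∈ s, z w = 1 := by
      rw [hsdef, Finset.sum_filter_ne_zero]; exact hsum
    by_cases hcl : G.IsClique ↑s
    · -- clique case
      have hscard : s.card ≤ r := nik_clique_card G hG hcl
      have hs_ne : 0 < s.card := by
        rcases Nat.eq_zero_or_pos s.card with h0 | h
        · exfalso
          rw [Finset.card_eq_zero] at h0
          rw [h0] at hsum_s; simp at hsum_s
        · exact h
      have hQ : z ⬝ᵥ (G.adjMatrix ℝ *ᵥ z) ≤ 1 - ∑ w, z w ^ 2 := by
        have hbound : ∀ i, (G.adjMatrix ℝ *ᵥ z) i ≤ 1 - z i := by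
          intro i
          rw [G.adjMatrix_mulVec_apply]
          have h1 : ∑ u ∈ G.neighborFinset i, z u ≤ ∑ u ∈ univ.erase i, z u := by
            apply Finset.sum_le_sum_of_subset_of_nonneg
            · intro x hx
              simp only [SimpleGraph.mem_neighborFinset] at hx
              exact Finset.mem_erase.mpr ⟨(G.ne_of_adj hx.symm), Finset.mem_univ x⟩
            · intro x _ _; exact hz x
          have h2 : ∑ u ∈ univ.erase i, z u = 1 - z i := by
            rw [Finset.sum_erase_eq_sub (Finset.mem_univ i), hsum]
          linarith
        calc z ⬝ᵥ (G.adjMatrix ℝ *ᵥ z) = ∑ i, z i * (G.adjMatrix ℝ *ᵥ z) i := rfl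
          _ ≤ ∑ i, z i * (1 - z i) := by
              apply Finset.sum_le_sum
              intro i _
              exact mul_le_mul_of_nonneg_left (hbound i) (hz i)
          _ = (∑ i, z i) - ∑ i, z i ^ 2 := by
              rw [← Finset.sum_sub_distrib]; congr 1; ext i; ring
          _ = 1 - ∑ i, z i ^ 2 := by rw [hsum]
      have hsq : (1:ℝ)/(r:ℝ) ≤ ∑ w, z w ^ 2 := by
        have hcs : (∑ w ∈ s, z w) ^ 2 ≤ s.card * ∑ w ∈ s, z w ^ 2 :=
          sq_sum_le_card_mul_sum_sq
        rw [hsum_s, one_pow] at hcs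
        have h1 : ∑ w ∈ s, z w ^ 2 ≤ ∑ w, z w ^ 2 := by
          apply Finset.sum_le_sum_of_subset_of_nonneg (Finset.subset_univ s)
          intro i _ _; positivity
        have hrpos : (0:ℝ) < r := by positivity
        have hcardpos : (0:ℝ) < (s.card : ℝ) := by exact_mod_cast hs_ne
        have hcardle : (s.card : ℝ) ≤ (r : ℝ) := by exact_mod_cast hscard
        have : (1:ℝ) ≤ (r:ℝ) * ∑ w ∈ s, z w ^ 2 := by
          calc (1:ℝ) ≤ s.card * ∑ w ∈ s, z w ^ 2 := hcs
            _ ≤ (r:ℝ) * ∑ w ∈ s, z w ^ 2 := by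
                apply mul_le_mul_of_nonneg_right hcardle
                positivity
        rw [div_le_iff₀ hrpos]
        calc (1:ℝ) ≤ (r:ℝ) * ∑ w ∈ s, z w ^ 2 := this
          _ ≤ (r:ℝ) * ∑ w, z w ^ 2 := by
              apply mul_le_mul_of_nonneg_left h1 (le_of_lt hrpos)
          _ = (∑ w, z w ^ 2) * r := by ring
      linarith
    · -- non-clique case: shift
      rw [SimpleGraph.isClique_iff] at hcl
      simp only [Set.Pairwise] at hcl
      push_neg at hcl
      obtain ⟨u, hu, v, hv, huv, hnadj⟩ := hcl
      rw [Finset.mem_coe] at hu hv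
      -- wlog direction
      have key : ∀ u v : V, u ∈ s → v ∈ s → u ≠ v → ¬ G.Adj u v →
          (G.adjMatrix ℝ *ᵥ z) u ≤ (G.adjMatrix ℝ *ᵥ z) v →
          z ⬝ᵥ (G.adjMatrix ℝ *ᵥ z) ≤ 1 - 1/(r:ℝ) := by
        intro u v hu hv huv hnadj hle
        set z' := z + z u • (Pi.single v 1 - Pi.single u 1) with hz'
        have hz'u : z' u = 0 := by
          simp [hz', Pi.single_apply, huv.symm]
        have hz'v : z' v = z v + z u := by
          simp [hz', Pi.single_apply, huv]
        have hz'w : ∀ w, w ≠ u → w ≠ v → z' w = z w := by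
          intro w hwu hwv
          simp [hz', Pi.single_apply, hwu, hwv]
        have hz'nonneg : ∀ w, 0 ≤ z' w := by
          intro w
          rcases eq_or_ne w u with rfl | hwu
          · rw [hz'u]
          · rcases eq_or_ne w v with rfl | hwv
            · rw [hz'v]; have := hz w; have := hz u; linarith
            · rw [hz'w w hwu hwv]; exact hz w
        have hz'sum : ∑ w, z' w = 1 := by
          simp only [hz', Pi.add_apply, Pi.smul_apply, Pi.sub_apply, smul_eq_mul]
          rw [Finset.sum_add_distrib, hsum]
          have : ∑ w, z u * ((Pi.single v (1:ℝ) : V → ℝ) w - (Pi.single u (1:ℝ) : V → ℝ) w) = 0 := by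
            rw [← Finset.mul_sum, Finset.sum_sub_distrib]
            rw [Finset.sum_pi_single', Finset.sum_pi_single']
            simp
          rw [this, add_zero]
        have hz'supp : (univ.filter fun w => z' w ≠ 0) ⊆ s.erase u := by
          intro w hw
          simp only [Finset.mem_filter, Finset.mem_univ, true_and] at hw
          have hwu : w ≠ u := by
            intro h; rw [h, hz'u] at hw; exact hw rfl
          refine Finset.mem_erase.mpr ⟨hwu, ?_⟩
          rcases eq_or_ne w v with rfl | hwv
          · exact hv
          · rw [hz'w w hwu hwv] at hw
            simp [hsdef, hw]
        have hcard' : (univ.filter fun w => z' w ≠ 0).card ≤ n := by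
          have h1 := Finset.card_le_card hz'supp
          have h2 : (s.erase u).card = s.card - 1 := Finset.card_erase_of_mem hu
          omega
        have hIH := ih z' hz'nonneg hz'sum hcard'
        have hshift := nik_shift G z u v (z u) hnadj
        rw [← hz'] at hshift
        have hzu : 0 ≤ z u := hz u
        nlinarith [hshift, hIH, hle]
      rcases le_total ((G.adjMatrix ℝ *ᵥ z) u) ((G.adjMatrix ℝ *ᵥ z) v) with h | h
      · exact key u v hu hv huv hnadj h
      · exact key v u hv hu huv.symm (fun hh => hnadj hh.symm) h

lemma nik_row_sum (i : V) : ∑ j, G.adjMatrix ℝ i j = (G.degree i : ℝ) := by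
  simp [SimpleGraph.adjMatrix_apply, Finset.sum_ite, SimpleGraph.degree,
    SimpleGraph.neighborFinset_eq_filter]

lemma nik_total : ∑ i, ∑ j, G.adjMatrix ℝ i j = 2 * (G.edgeFinset.card : ℝ) := by
  rw [Finset.sum_congr rfl fun i _ => nik_row_sum G i, ← Nat.cast_sum,
    SimpleGraph.sum_degrees_eq_twice_card_edges]
  push_cast; ring


end NikAux


/-- Nikiforov's edge bound: a `K_{r+1}`-free graph with `m` edges has
`λ(G)² ≤ (1 - 1/r)·2m`. -/
theorem stmt_8 {V : Type*} [Fintype V] [DecidableEq V] (G : SimpleGraph V)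
    [DecidableRel G.Adj] (r : ℕ) (hr : 2 ≤ r) (hG : G.CliqueFree (r + 1))
    (lam : ℝ) (hlam : IsSpectralRadius G lam) :
    lam ^ 2 ≤ (1 - 1 / (r : ℝ)) * (2 * (G.edgeFinset.card : ℝ)) := by
  obtain ⟨⟨x, hx0, hAx⟩, -⟩ := hlam
  set A := G.adjMatrix ℝ with hA
  set y : V → ℝ := fun w => |x w| with hy
  set c : ℝ := ∑ w, x w ^ 2 with hc
  set m : ℝ := (G.edgeFinset.card : ℝ) with hm
  have hmnn : 0 ≤ m := by rw [hm]; positivity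
  have hynn : ∀ w, 0 ≤ y w := fun w => abs_nonneg _
  have hcpos : 0 < c := by
    obtain ⟨w, hw⟩ := Function.ne_iff.mp hx0
    have h1 : 0 < x w ^ 2 :=
      lt_of_le_of_ne (sq_nonneg _) (Ne.symm (pow_ne_zero 2 hw))
    have h2 : x w ^ 2 ≤ c :=
      Finset.single_le_sum (fun i _ => sq_nonneg (x i)) (Finset.mem_univ w)
    linarith
  have hcy : c = ∑ w, y w ^ 2 := by
    rw [hc, hy]; exact Finset.sum_congr rfl fun w _ => (sq_abs (x w)).symm
  have hptw : ∀ i, |lam| * y i ≤ (A *ᵥ y) i := by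
    intro i
    have h1 : (A *ᵥ x) i = lam * x i := by rw [hAx]; rfl
    have h2 : |lam| * y i = |(A *ᵥ x) i| := by rw [h1, abs_mul, hy]
    rw [h2, hA, G.adjMatrix_mulVec_apply, G.adjMatrix_mulVec_apply]
    calc |∑ u ∈ G.neighborFinset i, x u| ≤ ∑ u ∈ G.neighborFinset i, |x u| :=
          Finset.abs_sum_le_sum_abs _ _
      _ = ∑ u ∈ G.neighborFinset i, y u := rfl
  set Q : ℝ := y ⬝ᵥ (A *ᵥ y) with hQ
  have hlamc : |lam| * c ≤ Q := by
    rw [hcy, hQ, Finset.mul_sum]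
    apply Finset.sum_le_sum
    intro w _
    have h := mul_le_mul_of_nonneg_left (hptw w) (hynn w)
    nlinarith [hynn w, hptw w]
  set T : ℝ := ∑ i, ∑ j, A i j * (y i ^ 2 * y j ^ 2) with hT
  have hsq : ∀ i j : V, A i j * A i j = A i j := by
    intro i j
    rw [hA, SimpleGraph.adjMatrix_apply]
    split <;> ring
  have hTle : T ≤ (1 - 1/(r:ℝ)) * c ^ 2 := by
    set z : V → ℝ := fun w => y w ^ 2 / c with hz
    have hznn : ∀ w, 0 ≤ z w := by intro w; rw [hz]; positivity
    have hzsum : ∑ w, z w = 1 := by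
      rw [hz]; simp only
      rw [← Finset.sum_div, ← hcy, div_self (ne_of_gt hcpos)]
    have hms := nik_ms G (by omega : 1 ≤ r) hG (univ.filter fun w => z w ≠ 0).card
      z hznn hzsum le_rfl
    have hexp : z ⬝ᵥ (A *ᵥ z) = T / c ^ 2 := by
      have expand : z ⬝ᵥ (A *ᵥ z) = ∑ i, z i * ∑ j, A i j * z j := rfl
      rw [expand, hT, Finset.sum_div]
      refine Finset.sum_congr rfl fun i _ => ?_
      rw [Finset.sum_div, Finset.mul_sum]
      refine Finset.sum_congr rfl fun j _ => ?_
      simp only [hz]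
      field_simp
    rw [← hA, hexp, div_le_iff₀ (by positivity)] at hms
    linarith [hms]
  have hcs : Q ^ 2 ≤ (2 * m) * T := by
    have key := Finset.sum_mul_sq_le_sq_mul_sq (Finset.univ ×ˢ Finset.univ)
      (fun p : V × V => A p.1 p.2) (fun p : V × V => A p.1 p.2 * (y p.1 * y p.2))
    have e1 : ∑ p ∈ Finset.univ ×ˢ Finset.univ,
        (fun p : V × V => A p.1 p.2) p * ((fun p : V × V => A p.1 p.2 * (y p.1 * y p.2)) p)
        = Q := by
      have expand : Q = ∑ i, y i * ∑ j, A i j * y j := rfl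
      rw [expand, Finset.sum_product]
      refine Finset.sum_congr rfl fun i _ => ?_
      rw [Finset.mul_sum]
      refine Finset.sum_congr rfl fun j _ => ?_
      show A i j * (A i j * (y i * y j)) = y i * (A i j * y j)
      rw [← mul_assoc, hsq i j]
      ring
    have e2 : ∑ p ∈ Finset.univ ×ˢ Finset.univ,
        ((fun p : V × V => A p.1 p.2) p) ^ 2 = 2 * m := by
      rw [Finset.sum_product]
      rw [hm, ← nik_total G, ← hA]
      refine Finset.sum_congr rfl fun i _ => Finset.sum_congr rfl fun j _ => ?_
      show (A i j) ^ 2 = A i j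
      rw [sq, hsq i j]
    have e3 : ∑ p ∈ Finset.univ ×ˢ Finset.univ,
        ((fun p : V × V => A p.1 p.2 * (y p.1 * y p.2)) p) ^ 2 = T := by
      rw [Finset.sum_product, hT]
      refine Finset.sum_congr rfl fun i _ => Finset.sum_congr rfl fun j _ => ?_
      show (A i j * (y i * y j)) ^ 2 = A i j * (y i ^ 2 * y j ^ 2)
      have h2 : (A i j * (y i * y j)) ^ 2 = (A i j * A i j) * (y i ^2 * y j ^2) := by ring
      rw [h2, hsq i j]
    rw [e1, e2, e3] at key
    exact key
  have hQnn : 0 ≤ Q := le_trans (by positivity) hlamc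
  have h1 : lam ^ 2 * c ^ 2 ≤ Q ^ 2 := by
    have habs : (|lam| * c) ^ 2 = lam ^ 2 * c ^ 2 := by rw [mul_pow, sq_abs]
    rw [← habs]
    exact pow_le_pow_left₀ (by positivity) hlamc 2
  have h3 : (2 * m) * T ≤ (2 * m) * ((1 - 1/(r:ℝ)) * c ^ 2) :=
    mul_le_mul_of_nonneg_left hTle (by positivity)
  have hfin : lam ^ 2 * c ^ 2 ≤ ((1 - 1/(r:ℝ)) * (2 * m)) * c ^ 2 := by nlinarith
  exact le_of_mul_le_mul_right hfin (by positivity)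
end

section
/- Spectral stability for bipartization: for every ε > 0, if G is a triangle-free graph with m edges and λ(G) ≥ (1 − ε/2)·sqrt(m), then G can be made bipartite by removing at most ε·m edges. -/
open Finset Matrix

/-- Spectral stability for bipartization: a triangle-free graph with
`λ(G) ≥ (1 - ε/2)√m` can be made bipartite by deleting at most `ε m` edges. -/
theorem stmt_12 {V : Type*} [Fintype V] [DecidableEq V] (G : SimpleGraph V)
    [DecidableRel G.Adj] (hG : G.CliqueFree 3)
    (lam : ℝ) (hlam : IsSpectralRadius G lam) (ε : ℝ) (hε : 0 < ε)
    (h : (1 - ε / 2) * Real.sqrt (G.edgeFinset.card : ℝ) ≤ lam) :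
    ∃ s : Finset (Sym2 V), s ⊆ G.edgeFinset ∧
      (s.card : ℝ) ≤ ε * (G.edgeFinset.card : ℝ) ∧
      (G.deleteEdges ↑s).Colorable 2 := by
  classical
  by_cases hε1 : 1 ≤ ε
  · refine ⟨G.edgeFinset, subset_rfl, ?_, ?_⟩
    · have hm0 : (0 : ℝ) ≤ (G.edgeFinset.card : ℝ) := Nat.cast_nonneg _
      nlinarith
    · refine ⟨SimpleGraph.Coloring.mk (fun _ => (0 : Fin 2)) ?_⟩
      intro a b hab
      rw [SimpleGraph.deleteEdges_adj] at hab
      exact absurd (by simpa [SimpleGraph.mem_edgeFinset] using hab.1) hab.2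
  · push_neg at hε1
    obtain ⟨⟨x, hx0, hxe⟩, -⟩ := hlam
    obtain ⟨v0, hv0⟩ := Function.ne_iff.mp hx0
    have hVne : (Finset.univ : Finset V).Nonempty := ⟨v0, mem_univ v0⟩
    obtain ⟨u, -, hu⟩ := Finset.exists_max_image Finset.univ (fun v => |x v|) hVne
    have hM : 0 < |x u| := lt_of_lt_of_le (abs_pos.mpr hv0) (hu v0 (mem_univ v0))
    have hlam0 : 0 ≤ lam := by
      have h1 : (0 : ℝ) ≤ (1 - ε / 2) * Real.sqrt (G.edgeFinset.card : ℝ) :=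
        mul_nonneg (by linarith) (Real.sqrt_nonneg _)
      linarith
    set m := G.edgeFinset.card with hmdef
    set s : Finset (Sym2 V) := G.edgeFinset.filter (fun e => ∀ v ∈ e, ¬ G.Adj u v) with hsdef
    set T : Finset (Sym2 V) := G.edgeFinset.filter (fun e => ∃ v ∈ e, G.Adj u v) with hTdef
    -- eigen equation squared at u
    have h2 : (G.adjMatrix ℝ) *ᵥ ((G.adjMatrix ℝ) *ᵥ x) = (lam ^ 2) • x := by
      rw [hxe, Matrix.mulVec_smul, hxe, smul_smul, sq]
    have hA : lam ^ 2 * x u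
        = ∑ v ∈ G.neighborFinset u, ∑ w ∈ G.neighborFinset v, x w := by
      have := congrFun h2 u
      simpa [SimpleGraph.adjMatrix_mulVec_apply, Pi.smul_apply, smul_eq_mul] using this.symm
    have habs : |∑ v ∈ G.neighborFinset u, ∑ w ∈ G.neighborFinset v, x w|
        ≤ ∑ v ∈ G.neighborFinset u, (G.degree v : ℝ) * |x u| := by
      refine (Finset.abs_sum_le_sum_abs _ _).trans (Finset.sum_le_sum fun v _ => ?_)
      refine (Finset.abs_sum_le_sum_abs _ _).trans ?_
      calc ∑ w ∈ G.neighborFinset v, |x w| ≤ ∑ w ∈ G.neighborFinset v, |x u| :=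
            Finset.sum_le_sum fun w _ => hu w (mem_univ w)
        _ = (G.degree v : ℝ) * |x u| := by
            rw [Finset.sum_const, nsmul_eq_mul, SimpleGraph.card_neighborFinset_eq_degree]
    have hkey : lam ^ 2 ≤ ∑ v ∈ G.neighborFinset u, (G.degree v : ℝ) := by
      have hineq : lam ^ 2 * |x u|
          ≤ (∑ v ∈ G.neighborFinset u, (G.degree v : ℝ)) * |x u| := by
        calc lam ^ 2 * |x u| = |lam ^ 2 * x u| := by
              rw [abs_mul, abs_of_nonneg (sq_nonneg lam)]
          _ = |∑ v ∈ G.neighborFinset u, ∑ w ∈ G.neighborFinset v, x w| := by rw [hA]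
          _ ≤ ∑ v ∈ G.neighborFinset u, (G.degree v : ℝ) * |x u| := habs
          _ = (∑ v ∈ G.neighborFinset u, (G.degree v : ℝ)) * |x u| := by
              rw [Finset.sum_mul]
      exact le_of_mul_le_mul_right hineq hM
    -- degree sum equals number of edges touching the neighborhood of u
    have htri : ∀ {a b : V}, G.Adj u a → G.Adj u b → G.Adj a b → False := by
      intro a b ha hb hab
      exact hG _ (SimpleGraph.is3Clique_triple_iff.mpr ⟨ha, hb, hab⟩)
    have hTcard : ∑ v ∈ G.neighborFinset u, G.degree v = T.card := by
      have hdisj : ∀ v ∈ G.neighborFinset u, ∀ w ∈ G.neighborFinset u, v ≠ w →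
          Disjoint (G.incidenceFinset v) (G.incidenceFinset w) := by
        intro v hv w hw hvw
        rw [Finset.disjoint_left]
        intro e hev hew
        rw [SimpleGraph.mem_incidenceFinset] at hev hew
        have he : e = s(v, w) := (Sym2.mem_and_mem_iff hvw).mp ⟨hev.2, hew.2⟩
        have hadj : G.Adj v w := by
          have h1 := hev.1
          rwa [he, SimpleGraph.mem_edgeSet] at h1
        exact htri ((SimpleGraph.mem_neighborFinset _ _ _).mp hv)
          ((SimpleGraph.mem_neighborFinset _ _ _).mp hw) hadj
      calc ∑ v ∈ G.neighborFinset u, G.degree v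
          = ∑ v ∈ G.neighborFinset u, (G.incidenceFinset v).card := by
            simp [SimpleGraph.card_incidenceFinset_eq_degree]
        _ = ((G.neighborFinset u).biUnion (fun v => G.incidenceFinset v)).card :=
            (Finset.card_biUnion hdisj).symm
        _ = T.card := by
            congr 1
            ext e
            simp only [Finset.mem_biUnion, SimpleGraph.incidenceFinset_eq_filter,
              Finset.mem_filter, SimpleGraph.mem_neighborFinset, hTdef]
            tauto
    -- s and T are disjoint subsets of the edge set
    have hdisjsT : Disjoint s T := by
      rw [Finset.disjoint_left]
      intro e hes heT
      rw [hsdef, Finset.mem_filter] at hes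
      rw [hTdef, Finset.mem_filter] at heT
      obtain ⟨w, hw, hadj⟩ := heT.2
      exact hes.2 w hw hadj
    have hcards : s.card + T.card ≤ m := by
      rw [← Finset.card_union_of_disjoint hdisjsT]
      exact Finset.card_le_card (Finset.union_subset (Finset.filter_subset _ _)
        (Finset.filter_subset _ _))
    -- now the arithmetic
    have hTreal : lam ^ 2 ≤ (T.card : ℝ) := by
      calc lam ^ 2 ≤ ∑ v ∈ G.neighborFinset u, (G.degree v : ℝ) := hkey
        _ = ((∑ v ∈ G.neighborFinset u, G.degree v : ℕ) : ℝ) := by push_cast; ring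
        _ = (T.card : ℝ) := by rw [hTcard]
    have hcardsR : (s.card : ℝ) + (T.card : ℝ) ≤ (m : ℝ) := by exact_mod_cast hcards
    have hsq : Real.sqrt (m : ℝ) ^ 2 = (m : ℝ) := Real.sq_sqrt (Nat.cast_nonneg _)
    have hlamsq : (1 - ε / 2) ^ 2 * (m : ℝ) ≤ lam ^ 2 := by
      have hc : (0 : ℝ) ≤ (1 - ε / 2) * Real.sqrt (m : ℝ) :=
        mul_nonneg (by linarith) (Real.sqrt_nonneg _)
      nlinarith [mul_self_le_mul_self hc h, hsq]
    have hm0 : (0 : ℝ) ≤ (m : ℝ) := Nat.cast_nonneg _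
    refine ⟨s, Finset.filter_subset _ _, ?_, ?_⟩
    · nlinarith
    · refine ⟨SimpleGraph.Coloring.mk (fun v => if G.Adj u v then 0 else 1) ?_⟩
      intro a b hab
      rw [SimpleGraph.deleteEdges_adj] at hab
      obtain ⟨hab1, hab2⟩ := hab
      have hmem : s(a, b) ∈ G.edgeFinset := by
        rwa [SimpleGraph.mem_edgeFinset]
      have hex : ∃ v ∈ s(a, b), G.Adj u v := by
        by_contra hc
        push_neg at hc
        exact hab2 (Finset.mem_coe.mpr (Finset.mem_filter.mpr ⟨hmem, hc⟩))
      by_cases ha : G.Adj u a <;> by_cases hb : G.Adj u b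
      · exact absurd hab1 (fun hadj => htri ha hb hadj)
      · simp [ha, hb]
      · simp [ha, hb]
      · exfalso
        obtain ⟨v, hv, hva⟩ := hex
        rcases Sym2.mem_iff.mp hv with rfl | rfl
        · exact ha hva
        · exact hb hva
end

section
/- Let G be an n-vertex triangle-free graph with e(G) ≥ ⌊n²/4⌋ − q. Then G can be made bipartite by removing at most q edges. In particular, if A is a maximum independent set and B = V(G) ∖ A, then e(B) ≤ q. -/
open Finset Matrix

/-- Stability of Mantel's theorem: a triangle-free graph with
`e(G) ≥ ⌊n²/4⌋ - q` can be made bipartite by deleting at most `q` edges;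
moreover, if `A` is a maximum independent set and `B = V ∖ A`, then `e(B) ≤ q`. -/
theorem stmt_13 {V : Type*} [Fintype V] [DecidableEq V] (G : SimpleGraph V)
    [DecidableRel G.Adj] (hG : G.CliqueFree 3) (q : ℕ)
    (hm : Fintype.card V ^ 2 / 4 ≤ G.edgeFinset.card + q)
    (A : Finset V) (hAind : ∀ u ∈ A, ∀ v ∈ A, ¬ G.Adj u v)
    (hAmax : ∀ C : Finset V, (∀ u ∈ C, ∀ v ∈ C, ¬ G.Adj u v) → C.card ≤ A.card) :
    (∃ s : Finset (Sym2 V), s ⊆ G.edgeFinset ∧ s.card ≤ q ∧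
      (G.deleteEdges ↑s).Colorable 2) ∧
    (G.edgeFinset.filter fun e => ∀ v ∈ e, v ∉ A).card ≤ q := by
  classical
  set n := Fintype.card V with hn
  set B : Finset V := Aᶜ with hBdef
  have hdeg : ∀ v : V, G.degree v ≤ A.card := by
    intro v
    rw [← G.card_neighborFinset_eq_degree]
    apply hAmax
    intro u hu w hw hadj
    rw [SimpleGraph.mem_neighborFinset] at hu hw
    exact hG {v, u, w} (SimpleGraph.is3Clique_triple_iff.mpr ⟨hu, hw, hadj⟩)
  have key : G.edgeFinset.card + (G.edgeFinset.filter fun e => ∀ v ∈ e, v ∉ A).card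
      ≤ ∑ v ∈ B, G.degree v := by
    have h1 : ∑ v ∈ B, G.degree v
        = ∑ e ∈ G.edgeFinset, (B.filter (fun v => v ∈ e)).card := by
      have hd : ∀ v, G.degree v = (G.edgeFinset.filter (fun e => v ∈ e)).card := by
        intro v
        rw [← SimpleGraph.card_incidenceFinset_eq_degree,
          SimpleGraph.incidenceFinset_eq_filter]
      simp_rw [hd, Finset.card_filter]
      rw [Finset.sum_comm]
    have h2 : G.edgeFinset.card + (G.edgeFinset.filter fun e => ∀ v ∈ e, v ∉ A).card
        = ∑ e ∈ G.edgeFinset, (1 + if (∀ v ∈ e, v ∉ A) then 1 else 0) := by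
      rw [Finset.sum_add_distrib, Finset.sum_const, smul_eq_mul, mul_one,
        Finset.card_filter]
    rw [h1, h2]
    apply Finset.sum_le_sum
    intro e he
    induction e using Sym2.ind with
    | _ a b =>
      rw [SimpleGraph.mem_edgeFinset, SimpleGraph.mem_edgeSet] at he
      by_cases ha : a ∈ A <;> by_cases hb : b ∈ A
      · exact absurd he (hAind a ha b hb)
      · have : (if (∀ v ∈ s(a, b), v ∉ A) then 1 else 0) = 0 := by
          rw [if_neg]; intro h; exact h a (Sym2.mem_mk_left a b) ha
        rw [this]
        refine Finset.one_le_card.mpr ⟨b, Finset.mem_filter.mpr ⟨?_, Sym2.mem_mk_right a b⟩⟩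
        simpa [hBdef] using hb
      · have : (if (∀ v ∈ s(a, b), v ∉ A) then 1 else 0) = 0 := by
          rw [if_neg]; intro h; exact h b (Sym2.mem_mk_right a b) hb
        rw [this]
        refine Finset.one_le_card.mpr ⟨a, Finset.mem_filter.mpr ⟨?_, Sym2.mem_mk_left a b⟩⟩
        simpa [hBdef] using ha
      · have h0 : (if (∀ v ∈ s(a, b), v ∉ A) then 1 else 0) = 1 := by
          rw [if_pos]
          intro v hv
          rcases Sym2.mem_iff.mp hv with rfl | rfl
          · exact ha
          · exact hb
        rw [h0]
        have hsub : ({a, b} : Finset V) ⊆ B.filter (fun v => v ∈ s(a, b)) := by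
          intro x hx
          rcases Finset.mem_insert.mp hx with rfl | hx
          · exact Finset.mem_filter.mpr ⟨by simpa [hBdef] using ha, Sym2.mem_mk_left _ _⟩
          · rw [Finset.mem_singleton] at hx
            subst hx
            exact Finset.mem_filter.mpr ⟨by simpa [hBdef] using hb, Sym2.mem_mk_right _ _⟩
        calc 1 + 1 = ({a, b} : Finset V).card := (Finset.card_pair he.ne).symm
          _ ≤ _ := Finset.card_le_card hsub
  have h3 : ∑ v ∈ B, G.degree v ≤ B.card * A.card := by
    simpa using Finset.sum_le_card_nsmul B _ A.card (fun v _ => hdeg v)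
  have h4 : B.card * A.card ≤ n ^ 2 / 4 := by
    rw [Nat.le_div_iff_mul_le (by norm_num)]
    have hcc : A.card + B.card = n := by
      simp only [hBdef, Finset.mem_compl]; exact Finset.card_add_card_compl A
    nlinarith [sq_nonneg (A.card + B.card), two_mul_le_add_sq A.card B.card]
  have hfinal : G.edgeFinset.card + (G.edgeFinset.filter fun e => ∀ v ∈ e, v ∉ A).card
      ≤ G.edgeFinset.card + q := le_trans (le_trans key (le_trans h3 h4)) hm
  have hbad : (G.edgeFinset.filter fun e => ∀ v ∈ e, v ∉ A).card ≤ q :=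
    Nat.le_of_add_le_add_left hfinal
  refine ⟨⟨G.edgeFinset.filter (fun e => ∀ v ∈ e, v ∉ A), Finset.filter_subset _ _, hbad, ?_⟩,
    hbad⟩
  refine ⟨SimpleGraph.Coloring.mk (fun v => if v ∈ A then (0 : Fin 2) else 1) ?_⟩
  intro u v huv
  rw [SimpleGraph.deleteEdges_adj] at huv
  obtain ⟨hadj, hne⟩ := huv
  by_cases hu : u ∈ A <;> by_cases hv : v ∈ A
  · exact absurd hadj (hAind u hu v hv)
  · simp [hu, hv]
  · simp [hu, hv]
  · exfalso
    apply hne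
    rw [Finset.mem_coe, Finset.mem_filter]
    refine ⟨SimpleGraph.mem_edgeFinset.mpr hadj, ?_⟩
    intro w hw
    rcases Sym2.mem_iff.mp hw with rfl | rfl
    · exact hu
    · exact hv
end

section
/- Let G be a bipartite graph with m edges, parts A and B, and unit Perron–Frobenius eigenvector taking values (x_i)_{i∈A}, (y_j)_{j∈B}. If λ(G) ≥ (1 − δ)·sqrt(m) with δ ≥ 0, then Σ_{(i,j) ∈ (A×B)∖E(G)} x_i² y_j² + Σ_{ij ∈ E(G)} (x_i y_j − 1/(2·sqrt(m)))² ≤ δ/2. -/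
open Finset Matrix

/-- For a bipartite graph (parts `A` and `Aᶜ`) with `λ(G) ≥ (1 - δ)√m`, the sum
of `xᵢ²yⱼ²` over non-edges plus `(xᵢyⱼ - 1/(2√m))²` over edges is at most `δ/2`. -/
theorem stmt_14 {V : Type*} [Fintype V] [DecidableEq V] (G : SimpleGraph V)
    [DecidableRel G.Adj] (A : Finset V)
    (hbip : ∀ u v : V, G.Adj u v → (u ∈ A ∧ v ∉ A) ∨ (u ∉ A ∧ v ∈ A))
    (lam : ℝ) (hlam : IsSpectralRadius G lam)
    (x : V → ℝ) (hx0 : ∀ w, 0 ≤ x w) (hxunit : ∑ w, x w ^ 2 = 1)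
    (hxeig : (G.adjMatrix ℝ) *ᵥ x = lam • x)
    (hm : 0 < G.edgeFinset.card)
    (δ : ℝ) (hδ : 0 ≤ δ)
    (h : (1 - δ) * Real.sqrt (G.edgeFinset.card : ℝ) ≤ lam) :
    ∑ i ∈ A, ∑ j ∈ Aᶜ,
        (if G.Adj i j then
          (x i * x j - 1 / (2 * Real.sqrt (G.edgeFinset.card : ℝ))) ^ 2
        else x i ^ 2 * x j ^ 2)
      ≤ δ / 2 := by

  classical
  set m : ℝ := (G.edgeFinset.card : ℝ) with hmdef
  have hm' : (0:ℝ) < m := by rw [hmdef]; exact_mod_cast hm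
  have hsm : 0 < Real.sqrt m := Real.sqrt_pos.mpr hm'
  set s : ℝ := 1 / (2 * Real.sqrt m) with hsdef
  have hs0 : 0 < s := by positivity
  -- general splitting lemma for symmetric, adjacency-supported functions
  have split : ∀ g : V → V → ℝ, (∀ w v, ¬ G.Adj w v → g w v = 0) →
      (∀ w v, g w v = g v w) →
      ∑ w, ∑ v, g w v = 2 * ∑ i ∈ A, ∑ j ∈ Aᶜ, g i j := by
    intro g hg0 hgs
    have h1 : ∀ w ∈ A, ∑ v, g w v = ∑ v ∈ Aᶜ, g w v := by
      intro w hw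
      rw [← Finset.sum_add_sum_compl A (g w)]
      have hz : ∑ v ∈ A, g w v = 0 := Finset.sum_eq_zero (fun v hv => hg0 w v (fun hadj => by
        rcases hbip w v hadj with ⟨_, h2⟩ | ⟨h1, _⟩ <;> simp_all))
      rw [hz, zero_add]
    have h2 : ∀ w ∈ Aᶜ, ∑ v, g w v = ∑ v ∈ A, g w v := by
      intro w hw
      rw [← Finset.sum_add_sum_compl A (g w)]
      have hz : ∑ v ∈ Aᶜ, g w v = 0 := Finset.sum_eq_zero (fun v hv => hg0 w v (fun hadj => by
        rw [Finset.mem_compl] at hw hv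
        rcases hbip w v hadj with ⟨h1, _⟩ | ⟨_, h2⟩ <;> simp_all))
      rw [hz, add_zero]
    calc ∑ w, ∑ v, g w v
        = ∑ w ∈ A, ∑ v, g w v + ∑ w ∈ Aᶜ, ∑ v, g w v :=
          (Finset.sum_add_sum_compl A _).symm
      _ = ∑ w ∈ A, ∑ v ∈ Aᶜ, g w v + ∑ w ∈ Aᶜ, ∑ v ∈ A, g w v := by
          rw [Finset.sum_congr rfl h1, Finset.sum_congr rfl h2]
      _ = ∑ w ∈ A, ∑ v ∈ Aᶜ, g w v + ∑ v ∈ A, ∑ w ∈ Aᶜ, g w v := by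
          congr 1; exact Finset.sum_comm
      _ = 2 * ∑ i ∈ A, ∑ j ∈ Aᶜ, g i j := by
          have hc : ∑ v ∈ A, ∑ w ∈ Aᶜ, g w v = ∑ i ∈ A, ∑ j ∈ Aᶜ, g i j :=
            Finset.sum_congr rfl (fun i _ => Finset.sum_congr rfl (fun j _ => hgs j i))
          rw [hc]; ring
  -- the eigenvalue as a quadratic form
  have hquad : ∑ w, ∑ v, (if G.Adj w v then x w * x v else 0) = lam := by
    have h1 : ∑ w, x w * (G.adjMatrix ℝ *ᵥ x) w = lam := by
      rw [hxeig]
      have he : ∀ w ∈ (univ : Finset V), x w * (lam • x) w = lam * x w ^ 2 := by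
        intro w _; simp only [Pi.smul_apply, smul_eq_mul]; ring
      rw [Finset.sum_congr rfl he, ← Finset.mul_sum, hxunit, mul_one]
    rw [← h1]
    refine Finset.sum_congr rfl fun w _ => ?_
    simp only [Matrix.mulVec, dotProduct, SimpleGraph.adjMatrix_apply,
      Finset.mul_sum]
    refine Finset.sum_congr rfl fun v _ => ?_
    split_ifs <;> ring
  have hT : 2 * ∑ i ∈ A, ∑ j ∈ Aᶜ, (if G.Adj i j then x i * x j else 0) = lam := by
    rw [← split (fun w v => if G.Adj w v then x w * x v else 0)
      (fun w v hn => by simp [hn])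
      (fun w v => by
        by_cases hwv : G.Adj w v
        · simp [hwv, hwv.symm, mul_comm]
        · have hvw : ¬ G.Adj v w := fun hv => hwv hv.symm
          simp [hwv, hvw])]
    exact hquad
  -- counting edges between A and Aᶜ
  have hcount : ∑ i ∈ A, ∑ j ∈ Aᶜ, (if G.Adj i j then (1:ℝ) else 0) = m := by
    have hdeg : ∀ w, ∑ v, (if G.Adj w v then (1:ℝ) else 0) = (G.degree w : ℝ) := by
      intro w
      rw [Finset.sum_boole]
      congr 1
      rw [SimpleGraph.degree]
      congr 1
      ext v
      simp [SimpleGraph.mem_neighborFinset]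
    have h2m : ∑ w, ∑ v, (if G.Adj w v then (1:ℝ) else 0) = 2 * m := by
      rw [Finset.sum_congr rfl (fun w _ => hdeg w)]
      rw [hmdef]
      rw [← Nat.cast_sum]
      rw [SimpleGraph.sum_degrees_eq_twice_card_edges]
      push_cast
      ring
    have := split (fun w v => if G.Adj w v then (1:ℝ) else 0)
      (fun w v hn => by simp [hn])
      (fun w v => by
        by_cases hwv : G.Adj w v
        · simp [hwv, hwv.symm]
        · have hvw : ¬ G.Adj v w := fun hv => hwv hv.symm
          simp [hwv, hvw])
    rw [h2m] at this
    linarith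
  -- sums of squares on the two sides
  set SA : ℝ := ∑ i ∈ A, x i ^ 2 with hSAdef
  set SB : ℝ := ∑ j ∈ Aᶜ, x j ^ 2 with hSBdef
  have hS : SA + SB = 1 := by
    rw [hSAdef, hSBdef, Finset.sum_add_sum_compl]; exact hxunit
  have hSA0 : 0 ≤ SA := Finset.sum_nonneg (fun i _ => sq_nonneg _)
  have hSB0 : 0 ≤ SB := Finset.sum_nonneg (fun i _ => sq_nonneg _)
  -- rewrite the LHS
  have key : ∑ i ∈ A, ∑ j ∈ Aᶜ,
        (if G.Adj i j then (x i * x j - s) ^ 2 else x i ^ 2 * x j ^ 2)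
      = SA * SB + s ^ 2 * m
        - 2 * s * ∑ i ∈ A, ∑ j ∈ Aᶜ, (if G.Adj i j then x i * x j else 0) := by
    have hterm : ∀ i j, (if G.Adj i j then (x i * x j - s) ^ 2 else x i ^ 2 * x j ^ 2)
        = x i ^ 2 * x j ^ 2 + s ^ 2 * (if G.Adj i j then (1:ℝ) else 0)
          - 2 * s * (if G.Adj i j then x i * x j else 0) := by
      intro i j; split_ifs <;> ring
    simp_rw [hterm]
    rw [show SA * SB = ∑ i ∈ A, ∑ j ∈ Aᶜ, x i ^ 2 * x j ^ 2 from Finset.sum_mul_sum _ _ _ _]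
    rw [← hcount]
    simp_rw [Finset.sum_sub_distrib, Finset.sum_add_distrib, ← Finset.mul_sum]
  have hq : ∑ i ∈ A, ∑ j ∈ Aᶜ,
        (if G.Adj i j then (x i * x j - s) ^ 2 else x i ^ 2 * x j ^ 2)
      = SA * SB + s ^ 2 * m - s * lam := by
    rw [key, ← hT]; ring
  have hsq : s ^ 2 * m = 1 / 4 := by
    rw [hsdef]
    rw [div_pow, mul_pow, Real.sq_sqrt hm'.le]
    field_simp
    ring
  have hslam : (1 - δ) / 2 ≤ s * lam := by
    have h1 : s * ((1 - δ) * Real.sqrt m) ≤ s * lam :=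
      mul_le_mul_of_nonneg_left h hs0.le
    have h2 : s * ((1 - δ) * Real.sqrt m) = (1 - δ) / 2 := by
      rw [hsdef]; field_simp
    linarith
  rw [hq, hsq]
  nlinarith [sq_nonneg (SA - SB)]
end

section
/- Let G be a graph with m edges and unit Perron–Frobenius eigenvector x. Then Σ_{i,j ∈ V(G)} |N(i) ∩ N(j)| · x_i² x_j² ≥ λ(G)³/(2m), where the sum includes i = j with |N(i) ∩ N(i)| = d_i. -/
open Finset Matrix

theorem Matrix.IsHermitian.dotProduct_mulVec_le_of_eigenvalue_le {n : Type*} [Fintype n]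
    [DecidableEq n] {A : Matrix n n ℝ} (hA : A.IsHermitian) {lam : ℝ}
    (hmax : ∀ μ : ℝ, (∃ v : n → ℝ, v ≠ 0 ∧ A *ᵥ v = μ • v) → μ ≤ lam) (v : n → ℝ) :
    v ⬝ᵥ A *ᵥ v ≤ lam * (v ⬝ᵥ v) := by
  have hB : (lam • 1 - A).IsHermitian := (isHermitian_one.smul (IsSelfAdjoint.all lam)).sub hA
  have hBpsd : (lam • 1 - A).PosSemidef := by
    refine hB.posSemidef_iff_eigenvalues_nonneg.mpr fun i => ?_
    have he := hB.mulVec_eigenvectorBasis i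
    rw [sub_mulVec, smul_mulVec, one_mulVec] at he
    have hAe : A *ᵥ ⇑(hB.eigenvectorBasis i) =
        (lam - hB.eigenvalues i) • ⇑(hB.eigenvectorBasis i) := by
      rw [sub_smul, ← he, sub_sub_cancel]
    have hne : ⇑(hB.eigenvectorBasis i) ≠ 0 := by
      simpa using hB.eigenvectorBasis.orthonormal.ne_zero i
    have := hmax _ ⟨_, hne, hAe⟩
    show 0 ≤ hB.eigenvalues i
    linarith
  have := hBpsd.dotProduct_mulVec_nonneg v
  rw [sub_mulVec, smul_mulVec, one_mulVec, dotProduct_sub, dotProduct_smul, star_trivial] at this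
  simpa [sub_nonneg] using this

namespace SimpleGraph

variable {V : Type*} [Fintype V] (G : SimpleGraph V) [DecidableRel G.Adj]

theorem sum_neighborFinset_comm {M : Type*} [AddCommMonoid M] (F : V → V → M) :
    ∑ i, ∑ j ∈ G.neighborFinset i, F i j = ∑ i, ∑ j ∈ G.neighborFinset i, F j i :=
  Finset.sum_comm' fun i j => by simp [adj_comm]

theorem dotProduct_adjMatrix_mulVec {R : Type*} [NonAssocSemiring R] (v : V → R) :
    v ⬝ᵥ G.adjMatrix R *ᵥ v = ∑ i, ∑ j ∈ G.neighborFinset i, v i * v j := by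
  simp [dotProduct, adjMatrix_mulVec_apply, mul_sum]

theorem sum_card_neighborFinset_inter_mul_mul [DecidableEq V] {R : Type*} [CommSemiring R]
    (f : V → R) :
    ∑ i, ∑ j, (#(G.neighborFinset i ∩ G.neighborFinset j) : R) * f i * f j =
      ∑ k, (∑ j ∈ G.neighborFinset k, f j) ^ 2 := by
  have hcard (i j : V) : (#(G.neighborFinset i ∩ G.neighborFinset j) : R) * f i * f j =
      ∑ k, if G.Adj k i ∧ G.Adj k j then f i * f j else 0 := by
    rw [← sum_filter, sum_const, nsmul_eq_mul, mul_assoc]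
    congr 3; ext k; simp [adj_comm]
  have hsq (k : V) : (∑ j ∈ G.neighborFinset k, f j) ^ 2 =
      ∑ i, ∑ j, if G.Adj k i ∧ G.Adj k j then f i * f j else 0 := by
    simp_rw [sq, sum_mul_sum, neighborFinset_eq_filter, sum_filter, ite_and, sum_ite_irrel,
      sum_const_zero]
  simp_rw [hcard, hsq]
  exact (sum_congr rfl fun _ _ => sum_comm).trans sum_comm

theorem sq_sum_neighborFinset_mul_le (x : V → ℝ) :
    (∑ i, ∑ j ∈ G.neighborFinset i, x i * x j) ^ 2 ≤
      (∑ i, ∑ j ∈ G.neighborFinset i, x i ^ 2 * x j ^ 2 / (√(G.degree i) * √(G.degree j))) *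
        ∑ i, ∑ j ∈ G.neighborFinset i, √(G.degree i) * √(G.degree j) := by
  simp_rw [sum_sigma']
  refine sum_sq_le_sum_mul_sum_of_sq_le_mul _ (fun _ _ => by positivity)
    (fun _ _ => by positivity) fun ⟨i, j⟩ hij => ?_
  have hadj : G.Adj i j := by simpa using hij
  have hdi := (G.degree_pos_iff_exists_adj i).mpr ⟨j, hadj⟩
  have hdj := (G.degree_pos_iff_exists_adj j).mpr ⟨i, hadj.symm⟩
  rw [div_mul_cancel₀ _ (by positivity), mul_pow]

theorem sum_div_sqrt_degree_mul_le (w : V → ℝ) (hw : ∀ i, 0 ≤ w i) :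
    ∑ i, ∑ j ∈ G.neighborFinset i, w i * w j / (√(G.degree i) * √(G.degree j)) ≤
      ∑ i, ∑ j ∈ G.neighborFinset i, w i * w j / G.degree i := by
  have hamgm (i j : V) : 2 * (w i * w j / (√(G.degree i) * √(G.degree j))) ≤
      w i * w j / G.degree i + w j * w i / G.degree j := by
    rw [mul_comm (w j) (w i)]
    calc 2 * (w i * w j / (√(G.degree i) * √(G.degree j)))
        = w i * w j * (2 * (√(G.degree i))⁻¹ * (√(G.degree j))⁻¹) := by ring
      _ ≤ w i * w j * ((√(G.degree i))⁻¹ ^ 2 + (√(G.degree j))⁻¹ ^ 2) :=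
        mul_le_mul_of_nonneg_left (two_mul_le_add_sq _ _) (mul_nonneg (hw i) (hw j))
      _ = w i * w j / G.degree i + w i * w j / G.degree j := by
        simp only [inv_pow, Real.sq_sqrt (Nat.cast_nonneg _)]; ring
  have := sum_le_sum fun i (_ : i ∈ univ) => sum_le_sum fun j (_ : j ∈ G.neighborFinset i) =>
    hamgm i j
  simp_rw [← mul_sum, sum_add_distrib] at this
  rw [← G.sum_neighborFinset_comm (fun i j => w i * w j / G.degree i)] at this
  linarith

variable {G} {x : V → ℝ} {lam : ℝ}

theorem sum_neighborFinset_eq_of_adjMatrix_mulVec_eq (h : G.adjMatrix ℝ *ᵥ x = lam • x) (i : V) :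
    ∑ j ∈ G.neighborFinset i, x j = lam * x i := by
  simpa [adjMatrix_mulVec_apply] using congrFun h i

theorem sq_mul_sum_sq_div_degree_le (h : G.adjMatrix ℝ *ᵥ x = lam • x) :
    lam ^ 2 * ∑ i, ∑ j ∈ G.neighborFinset i, x i ^ 2 * x j ^ 2 / G.degree i ≤
      ∑ i, (∑ j ∈ G.neighborFinset i, x j ^ 2) ^ 2 := by
  rw [mul_sum]
  refine sum_le_sum fun i _ => ?_
  have hcs : (lam * x i) ^ 2 ≤ G.degree i * ∑ j ∈ G.neighborFinset i, x j ^ 2 := by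
    rw [← sum_neighborFinset_eq_of_adjMatrix_mulVec_eq h i, ← card_neighborFinset_eq_degree]
    exact sq_sum_le_card_mul_sum_sq
  have hy : lam ^ 2 * x i ^ 2 / G.degree i ≤ ∑ j ∈ G.neighborFinset i, x j ^ 2 :=
    div_le_of_le_mul₀ (by positivity) (by positivity) (by linarith)
  calc lam ^ 2 * ∑ j ∈ G.neighborFinset i, x i ^ 2 * x j ^ 2 / G.degree i
      = lam ^ 2 * x i ^ 2 / G.degree i * ∑ j ∈ G.neighborFinset i, x j ^ 2 := by
        simp_rw [mul_sum]; exact sum_congr rfl fun _ _ => by ring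
    _ ≤ (∑ j ∈ G.neighborFinset i, x j ^ 2) * ∑ j ∈ G.neighborFinset i, x j ^ 2 :=
        mul_le_mul_of_nonneg_right hy (sum_nonneg fun _ _ => by positivity)
    _ = (∑ j ∈ G.neighborFinset i, x j ^ 2) ^ 2 := (sq _).symm

end SimpleGraph

theorem IsSpectralRadius.sum_sqrt_degree_mul_le {V : Type*} [Fintype V] [DecidableEq V]
    {G : SimpleGraph V} [DecidableRel G.Adj] {lam : ℝ} (hlam : IsSpectralRadius G lam) :
    ∑ i, ∑ j ∈ G.neighborFinset i, √(G.degree i) * √(G.degree j) ≤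
      lam * (2 * #G.edgeFinset) := by
  have := (G.isHermitian_adjMatrix ℝ).dotProduct_mulVec_le_of_eigenvalue_le hlam.2
    fun i => √(G.degree i)
  rw [G.dotProduct_adjMatrix_mulVec] at this
  convert this using 2
  simp [dotProduct, ← Nat.cast_sum, G.sum_degrees_eq_twice_card_edges]

theorem stmt_15_general {V : Type*} [Fintype V] [DecidableEq V] (G : SimpleGraph V)
    [DecidableRel G.Adj] (lam : ℝ) (hlam : IsSpectralRadius G lam)
    (x : V → ℝ) (hxunit : ∑ w, x w ^ 2 = 1)
    (hxeig : (G.adjMatrix ℝ) *ᵥ x = lam • x) :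
    lam ^ 3 / (2 * (G.edgeFinset.card : ℝ)) ≤
      ∑ i : V, ∑ j : V,
        ((G.neighborFinset i ∩ G.neighborFinset j).card : ℝ) * x i ^ 2 * x j ^ 2 := by
  have hquad : ∑ i, ∑ j ∈ G.neighborFinset i, x i * x j = lam := by
    rw [← G.dotProduct_adjMatrix_mulVec, hxeig, dotProduct_smul, smul_eq_mul]
    simp [dotProduct, ← sq, hxunit]
  have hCS := G.sq_sum_neighborFinset_mul_le x
  have hW := hlam.sum_sqrt_degree_mul_le
  have hUP := G.sum_div_sqrt_degree_mul_le (fun i => x i ^ 2) fun i => sq_nonneg _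
  have hPS := SimpleGraph.sq_mul_sum_sq_div_degree_le hxeig
  rw [G.sum_card_neighborFinset_inter_mul_mul (fun i => x i ^ 2)]
  rw [hquad] at hCS
  refine div_le_of_le_mul₀ (by positivity) (sum_nonneg fun _ _ => sq_nonneg _) ?_
  rcases le_or_gt lam 0 with hneg | hpos
  · exact (Odd.pow_nonpos (by decide) hneg).trans (by positivity)
  · set U := ∑ i, ∑ j ∈ G.neighborFinset i,
      x i ^ 2 * x j ^ 2 / (√(G.degree i) * √(G.degree j))
    have hU : lam ≤ U * (2 * #G.edgeFinset) := by
      refine le_of_mul_le_mul_left ?_ hpos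
      calc lam * lam = lam ^ 2 := (sq lam).symm
        _ ≤ U * (lam * (2 * #G.edgeFinset)) :=
          hCS.trans (mul_le_mul_of_nonneg_left hW (by positivity))
        _ = lam * (U * (2 * #G.edgeFinset)) := by ring
    calc lam ^ 3 = lam ^ 2 * lam := by ring
      _ ≤ lam ^ 2 * U * (2 * #G.edgeFinset) := by rw [mul_assoc]; gcongr
      _ ≤ _ := by gcongr; exact (mul_le_mul_of_nonneg_left hUP (by positivity)).trans hPS

/-- Codegree–Perron inequality: `Σ_{i,j} |N(i)∩N(j)| xᵢ²xⱼ² ≥ λ³/(2m)`. -/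
theorem stmt_15 {V : Type*} [Fintype V] [DecidableEq V] (G : SimpleGraph V)
    [DecidableRel G.Adj] (lam : ℝ) (hlam : IsSpectralRadius G lam)
    (x : V → ℝ) (hx0 : ∀ w, 0 ≤ x w) (hxunit : ∑ w, x w ^ 2 = 1)
    (hxeig : (G.adjMatrix ℝ) *ᵥ x = lam • x)
    (hm : 0 < G.edgeFinset.card) :
    lam ^ 3 / (2 * (G.edgeFinset.card : ℝ)) ≤
      ∑ i : V, ∑ j : V,
        ((G.neighborFinset i ∩ G.neighborFinset j).card : ℝ) * x i ^ 2 * x j ^ 2 :=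
  stmt_15_general G lam hlam x hxunit hxeig
end

section
/- Let G be a graph with m edges such that λ(G) > sqrt(m), and suppose the codegree of every pair of distinct vertices is at most t. If the unit Perron–Frobenius eigenvector x satisfies max_i x_i = M, then t + 2m·M⁴ > sqrt(m)/2. -/
open Finset Matrix

private theorem pairCS {V : Type*} [Fintype V] {p f g : V → V → ℝ}
    (hf : ∀ i k, 0 ≤ f i k) (hg : ∀ i k, 0 ≤ g i k)
    (hpfg : ∀ i k, p i k ^ 2 = f i k * g i k) :
    (∑ i, ∑ k, p i k) ^ 2 ≤ (∑ i, ∑ k, f i k) * (∑ i, ∑ k, g i k) := by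
  have h := Finset.sum_sq_le_sum_mul_sum_of_sq_eq_mul (Finset.univ : Finset (V × V))
      (r := fun q : V × V => p q.1 q.2) (f := fun q : V × V => f q.1 q.2)
      (g := fun q : V × V => g q.1 q.2)
      (fun q _ => hf q.1 q.2) (fun q _ => hg q.1 q.2) (fun q _ => hpfg q.1 q.2)
  simpa [Fintype.sum_prod_type] using h

set_option maxHeartbeats 1000000 in
private theorem core {V : Type*} [Fintype V] (A : V → V → ℝ) (x : V → ℝ) (d : V → ℝ)
    (lam : ℝ)
    (hA0 : ∀ i k, 0 ≤ A i k) (hAsym : ∀ i k, A i k = A k i)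
    (hAidem : ∀ i k, A i k * A i k = A i k)
    (hx0 : ∀ i, 0 ≤ x i) (hxunit : ∑ i, x i ^ 2 = 1)
    (heig : ∀ i, ∑ k, A i k * x k = lam * x i)
    (hd : ∀ i, ∑ k, A i k = d i) (hlam : 0 < lam) :
    lam ^ 3 ≤ (∑ i, d i) * ∑ k, (∑ i, A i k * x i ^ 2) ^ 2 := by
  classical
  have hd0 : ∀ i, 0 ≤ d i := fun i => (hd i) ▸ Finset.sum_nonneg fun k _ => hA0 i k
  have hA1 : ∀ i k, A i k ≠ 0 → A i k = 1 := by
    intro i k h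
    have h2 := hAidem i k
    have : A i k * A i k = A i k * 1 := by rw [h2, mul_one]
    exact mul_left_cancel₀ h this
  have hdge1 : ∀ i k, A i k ≠ 0 → 1 ≤ d i := by
    intro i k h
    rw [← hd i]
    calc (1:ℝ) = A i k := (hA1 i k h).symm
    _ ≤ ∑ k', A i k' := Finset.single_le_sum (fun k' _ => hA0 i k') (Finset.mem_univ k)
  set r : V → ℝ := fun i => Real.sqrt (Real.sqrt (d i)) with hrdef
  have hr0 : ∀ i, 0 ≤ r i := fun i => Real.sqrt_nonneg _
  have hr2 : ∀ i, r i ^ 2 = Real.sqrt (d i) := fun i => Real.sq_sqrt (Real.sqrt_nonneg _)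
  have hr4 : ∀ i, (r i ^ 2) ^ 2 = d i := fun i => by rw [hr2]; exact Real.sq_sqrt (hd0 i)
  have hr1 : ∀ i k, A i k ≠ 0 → 1 ≤ r i := by
    intro i k h
    have h1 : (1:ℝ) ≤ Real.sqrt (d i) := by
      calc (1:ℝ) = Real.sqrt 1 := Real.sqrt_one.symm
      _ ≤ Real.sqrt (d i) := Real.sqrt_le_sqrt (hdge1 i k h)
    calc (1:ℝ) = Real.sqrt 1 := Real.sqrt_one.symm
    _ ≤ Real.sqrt (Real.sqrt (d i)) := Real.sqrt_le_sqrt h1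
  have hrpos : ∀ i k, A i k ≠ 0 → 0 < r i * r k := by
    intro i k h
    have h' : A k i ≠ 0 := by rw [← hAsym]; exact h
    have := hr1 i k h
    have := hr1 k i h'
    nlinarith
  have hlamsum : ∑ i, ∑ k, A i k * (x i * x k) = lam := by
    calc ∑ i, ∑ k, A i k * (x i * x k) = ∑ i, x i * ∑ k, A i k * x k := by
          refine Finset.sum_congr rfl fun i _ => ?_
          rw [Finset.mul_sum]
          exact Finset.sum_congr rfl fun k _ => by ring
    _ = ∑ i, x i * (lam * x i) := Finset.sum_congr rfl fun i _ => by rw [heig i]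
    _ = lam * ∑ i, x i ^ 2 := by rw [Finset.mul_sum]; exact Finset.sum_congr rfl fun i _ => by ring
    _ = lam := by rw [hxunit, mul_one]
  have hdcol : ∀ k, ∑ i, A i k = d k := fun k => by
    rw [← hd k]; exact Finset.sum_congr rfl fun i _ => hAsym i k
  -- named quantities
  set H := ∑ i, ∑ k, A i k * (x i * x k) * (r i * r k) with hHdef
  set I := ∑ i, ∑ k, A i k * (x i * x k) / (r i * r k) with hIdef
  set J := ∑ i, ∑ k, A i k * (x i * x k) / (r i ^ 2 * r k ^ 2) with hJdef
  set Gq := ∑ i, ∑ k, A i k * (x i ^ 2 * r k ^ 2) with hGqdef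
  have hterm : ∀ i k, 0 ≤ A i k * (x i * x k) := fun i k =>
    mul_nonneg (hA0 i k) (mul_nonneg (hx0 i) (hx0 k))
  have hH0 : 0 ≤ H := Finset.sum_nonneg fun i _ => Finset.sum_nonneg fun k _ =>
    mul_nonneg (hterm i k) (mul_nonneg (hr0 i) (hr0 k))
  have hI0 : 0 ≤ I := Finset.sum_nonneg fun i _ => Finset.sum_nonneg fun k _ =>
    div_nonneg (hterm i k) (mul_nonneg (hr0 i) (hr0 k))
  have hGq0 : 0 ≤ Gq := Finset.sum_nonneg fun i _ => Finset.sum_nonneg fun k _ =>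
    mul_nonneg (hA0 i k) (mul_nonneg (sq_nonneg _) (sq_nonneg _))
  -- CS1 : lam^2 ≤ H * I
  have hCS1 : lam ^ 2 ≤ H * I := by
    rw [← hlamsum, hHdef, hIdef]
    refine pairCS (fun i k => mul_nonneg (hterm i k) (mul_nonneg (hr0 i) (hr0 k)))
      (fun i k => div_nonneg (hterm i k) (mul_nonneg (hr0 i) (hr0 k))) ?_
    intro i k
    by_cases h : A i k = 0
    · simp [h]
    · have hri : r i ≠ 0 := ne_of_gt (lt_of_lt_of_le one_pos (hr1 i k h))
      have hrk : r k ≠ 0 := ne_of_gt (lt_of_lt_of_le one_pos (hr1 k i (by rw [← hAsym]; exact h)))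
      field_simp
  -- CS2 : I^2 ≤ lam * J
  have hCS2 : I ^ 2 ≤ lam * J := by
    rw [← hlamsum, hIdef, hJdef]
    refine pairCS (fun i k => hterm i k)
      (fun i k => div_nonneg (hterm i k) (mul_nonneg (sq_nonneg _) (sq_nonneg _))) ?_
    intro i k
    by_cases h : A i k = 0
    · simp [h]
    · have hri : r i ≠ 0 := ne_of_gt (lt_of_lt_of_le one_pos (hr1 i k h))
      have hrk : r k ≠ 0 := ne_of_gt (lt_of_lt_of_le one_pos (hr1 k i (by rw [← hAsym]; exact h)))
      field_simp
  -- CS3 : H ≤ Gq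
  have hGqswap : ∑ i, ∑ k, A i k * (x k ^ 2 * r i ^ 2) = Gq := by
    rw [hGqdef, Finset.sum_comm]
    exact Finset.sum_congr rfl fun k _ => Finset.sum_congr rfl fun i _ => by
      rw [hAsym]
  have hCS3 : H ^ 2 ≤ Gq * Gq := by
    rw [hHdef]
    calc (∑ i, ∑ k, A i k * (x i * x k) * (r i * r k)) ^ 2
        ≤ (∑ i, ∑ k, A i k * (x i ^ 2 * r k ^ 2)) * (∑ i, ∑ k, A i k * (x k ^ 2 * r i ^ 2)) := by
          refine pairCS (fun i k => mul_nonneg (hA0 i k) (mul_nonneg (sq_nonneg _) (sq_nonneg _)))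
            (fun i k => mul_nonneg (hA0 i k) (mul_nonneg (sq_nonneg _) (sq_nonneg _))) ?_
          intro i k
          have := hAidem i k
          nlinarith [hAidem i k]
    _ = Gq * Gq := by rw [hGqswap, ← hGqdef]
  have hHG : H ≤ Gq := by nlinarith [hCS3, hH0, hGq0]
  -- J ≤ 1
  set z : V → ℝ := fun i => x i / r i ^ 2 with hzdef
  have hJz : J = ∑ i, ∑ k, A i k * (z i * z k) := by
    rw [hJdef]
    refine Finset.sum_congr rfl fun i _ => Finset.sum_congr rfl fun k _ => ?_
    rw [hzdef]
    simp only []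
    rw [div_mul_div_comm, mul_div_assoc]
  have hsos : 0 ≤ ∑ i, ∑ k, A i k * (z i - z k) ^ 2 :=
    Finset.sum_nonneg fun i _ => Finset.sum_nonneg fun k _ => mul_nonneg (hA0 i k) (sq_nonneg _)
  have hexp : ∑ i, ∑ k, A i k * (z i - z k) ^ 2
      = (∑ i, d i * z i ^ 2) + (∑ k, d k * z k ^ 2) - 2 * ∑ i, ∑ k, A i k * (z i * z k) := by
    have e1 : ∀ i, ∑ k, A i k * (z i - z k) ^ 2
        = (∑ k, A i k * z i ^ 2) + (∑ k, A i k * z k ^ 2) - 2 * ∑ k, A i k * (z i * z k) := by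
      intro i
      rw [← Finset.sum_add_distrib, Finset.mul_sum, ← Finset.sum_sub_distrib]
      exact Finset.sum_congr rfl fun k _ => by ring
    calc ∑ i, ∑ k, A i k * (z i - z k) ^ 2
        = ∑ i, ((∑ k, A i k * z i ^ 2) + (∑ k, A i k * z k ^ 2) - 2 * ∑ k, A i k * (z i * z k)) :=
          Finset.sum_congr rfl fun i _ => e1 i
    _ = (∑ i, ∑ k, A i k * z i ^ 2) + (∑ i, ∑ k, A i k * z k ^ 2)
        - 2 * ∑ i, ∑ k, A i k * (z i * z k) := by
          rw [← Finset.sum_add_distrib, Finset.mul_sum, ← Finset.sum_sub_distrib]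
    _ = (∑ i, d i * z i ^ 2) + (∑ k, d k * z k ^ 2) - 2 * ∑ i, ∑ k, A i k * (z i * z k) := by
          congr 2
          · exact Finset.sum_congr rfl fun i _ => by
              rw [← Finset.sum_mul, hd i, mul_comm]
          · rw [Finset.sum_comm]
            exact Finset.sum_congr rfl fun k _ => by
              rw [← Finset.sum_mul, hdcol k, mul_comm]
  have hdz : ∀ i, d i * z i ^ 2 ≤ x i ^ 2 := by
    intro i
    rw [hzdef]
    simp only []
    rw [div_pow, hr4]
    by_cases hdi : d i = 0
    · rw [hdi, zero_mul]; positivity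
    · rw [mul_comm, div_mul_cancel₀ _ hdi]
  have hJ1 : J ≤ 1 := by
    have h1 : ∑ i, ∑ k, A i k * (z i * z k) ≤ ∑ i, d i * z i ^ 2 := by
      have := hsos
      rw [hexp] at this
      linarith
    calc J = ∑ i, ∑ k, A i k * (z i * z k) := hJz
    _ ≤ ∑ i, d i * z i ^ 2 := h1
    _ ≤ ∑ i, x i ^ 2 := Finset.sum_le_sum fun i _ => hdz i
    _ = 1 := hxunit
  -- CS4 : Gq^2 ≤ (∑ d) * S
  have hGqs : Gq = ∑ k, r k ^ 2 * (∑ i, A i k * x i ^ 2) := by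
    rw [hGqdef, Finset.sum_comm]
    exact Finset.sum_congr rfl fun k _ => by
      rw [Finset.mul_sum]
      exact Finset.sum_congr rfl fun i _ => by ring
  have hCS4 : Gq ^ 2 ≤ (∑ i, d i) * ∑ k, (∑ i, A i k * x i ^ 2) ^ 2 := by
    rw [hGqs]
    calc (∑ k, r k ^ 2 * (∑ i, A i k * x i ^ 2)) ^ 2
        ≤ (∑ k, (r k ^ 2) ^ 2) * ∑ k, (∑ i, A i k * x i ^ 2) ^ 2 :=
          Finset.sum_mul_sq_le_sq_mul_sq Finset.univ _ _
    _ = (∑ i, d i) * ∑ k, (∑ i, A i k * x i ^ 2) ^ 2 := by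
          congr 1
          exact Finset.sum_congr rfl fun k _ => hr4 k
  -- combine
  have hIl : I ^ 2 ≤ lam := by
    calc I ^ 2 ≤ lam * J := hCS2
    _ ≤ lam * 1 := mul_le_mul_of_nonneg_left hJ1 (le_of_lt hlam)
    _ = lam := mul_one lam
  have h4 : lam ^ 4 ≤ Gq ^ 2 * lam := by
    have hH2G2 : H ^ 2 ≤ Gq ^ 2 := by nlinarith [hHG, hH0, hGq0]
    calc lam ^ 4 = (lam ^ 2) ^ 2 := by ring
    _ ≤ (H * I) ^ 2 := pow_le_pow_left₀ (sq_nonneg lam) hCS1 2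
    _ = H ^ 2 * I ^ 2 := by ring
    _ ≤ Gq ^ 2 * I ^ 2 := mul_le_mul_of_nonneg_right hH2G2 (sq_nonneg I)
    _ ≤ Gq ^ 2 * lam := mul_le_mul_of_nonneg_left hIl (sq_nonneg Gq)
  have h3 : lam ^ 3 ≤ Gq ^ 2 := by
    have h5 : lam ^ 3 * lam ≤ Gq ^ 2 * lam := by nlinarith [h4]
    exact le_of_mul_le_mul_right h5 hlam
  calc lam ^ 3 ≤ Gq ^ 2 := h3
  _ ≤ (∑ i, d i) * ∑ k, (∑ i, A i k * x i ^ 2) ^ 2 := hCS4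

set_option maxHeartbeats 1000000 in
/-- If `λ(G) > √m` and every pair of distinct vertices has codegree at most `t`,
then `t + 2m·M⁴ > √m / 2`, where `M` is the largest Perron coordinate. -/
theorem stmt_16 {V : Type*} [Fintype V] [DecidableEq V] (G : SimpleGraph V)
    [DecidableRel G.Adj] (lam : ℝ) (hlam : IsSpectralRadius G lam)
    (x : V → ℝ) (hx0 : ∀ w, 0 ≤ x w) (hxunit : ∑ w, x w ^ 2 = 1)
    (hxeig : (G.adjMatrix ℝ) *ᵥ x = lam • x)
    (hl : Real.sqrt (G.edgeFinset.card : ℝ) < lam)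
    (t : ℕ) (hco : ∀ i j : V, i ≠ j → (G.neighborFinset i ∩ G.neighborFinset j).card ≤ t)
    (M : ℝ) (hM : IsGreatest (Set.range x) M) :
    Real.sqrt (G.edgeFinset.card : ℝ) / 2 <
      (t : ℝ) + 2 * (G.edgeFinset.card : ℝ) * M ^ 4 := by
  classical
  have hlam0 : 0 < lam := lt_of_le_of_lt (Real.sqrt_nonneg _) hl
  set A : V → V → ℝ := fun i k => if G.Adj i k then 1 else 0 with hA
  have hA0 : ∀ i k, 0 ≤ A i k := by
    intro i k; simp only [hA]; split <;> norm_num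
  have hAsym : ∀ i k, A i k = A k i := by
    intro i k; simp only [hA]
    by_cases h : G.Adj i k
    · rw [if_pos h, if_pos h.symm]
    · rw [if_neg h, if_neg (fun h' => h h'.symm)]
  have hAidem : ∀ i k, A i k * A i k = A i k := by
    intro i k; simp only [hA]; split <;> norm_num
  have heig : ∀ i, ∑ k, A i k * x k = lam * x i := by
    intro i
    have h := congrFun hxeig i
    simp only [Matrix.mulVec, dotProduct, SimpleGraph.adjMatrix_apply,
      Pi.smul_apply, smul_eq_mul] at h
    simpa [hA] using h
  set d : V → ℝ := fun i => ((G.degree i : ℕ) : ℝ) with hd'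
  have hd : ∀ i, ∑ k, A i k = d i := by
    intro i
    simp only [hA, hd']
    rw [Finset.sum_boole]
    congr 1
    simp [SimpleGraph.degree, SimpleGraph.neighborFinset_eq_filter]
  have hd0 : ∀ i, 0 ≤ d i := fun i => by simp only [hd']; positivity
  have hsumd : ∑ i, d i = 2 * (G.edgeFinset.card : ℝ) := by
    simp only [hd']
    rw [← Nat.cast_sum, SimpleGraph.sum_degrees_eq_twice_card_edges]
    push_cast; ring
  have hcore := core A x d lam hA0 hAsym hAidem hx0 hxunit heig hd hlam0
  -- expand S
  have hexp : ∑ k, (∑ i, A i k * x i ^ 2) ^ 2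
      = ∑ i, ∑ j, (∑ k, A i k * A j k) * (x i ^ 2 * x j ^ 2) := by
    have e1 : ∀ k, (∑ i, A i k * x i ^ 2) ^ 2
        = ∑ i, ∑ j, (A i k * x i ^ 2) * (A j k * x j ^ 2) := by
      intro k
      rw [sq, Finset.sum_mul_sum]
    calc ∑ k, (∑ i, A i k * x i ^ 2) ^ 2
        = ∑ k, ∑ i, ∑ j, (A i k * x i ^ 2) * (A j k * x j ^ 2) :=
          Finset.sum_congr rfl fun k _ => e1 k
    _ = ∑ i, ∑ k, ∑ j, (A i k * x i ^ 2) * (A j k * x j ^ 2) := Finset.sum_comm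
    _ = ∑ i, ∑ j, ∑ k, (A i k * x i ^ 2) * (A j k * x j ^ 2) :=
          Finset.sum_congr rfl fun i _ => Finset.sum_comm
    _ = ∑ i, ∑ j, (∑ k, A i k * A j k) * (x i ^ 2 * x j ^ 2) := by
          refine Finset.sum_congr rfl fun i _ => Finset.sum_congr rfl fun j _ => ?_
          rw [Finset.sum_mul]
          exact Finset.sum_congr rfl fun k _ => by ring
  have hcdiag : ∀ i, (∑ k, A i k * A i k) = d i := fun i =>
    (Finset.sum_congr rfl fun k _ => hAidem i k).trans (hd i)
  have hcoff : ∀ i j, i ≠ j → (∑ k, A i k * A j k) ≤ (t : ℝ) := by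
    intro i j hij
    have hval : (∑ k, A i k * A j k)
        = ((G.neighborFinset i ∩ G.neighborFinset j).card : ℝ) := by
      simp only [hA]
      have : ∀ k, (if G.Adj i k then (1:ℝ) else 0) * (if G.Adj j k then (1:ℝ) else 0)
          = if G.Adj i k ∧ G.Adj j k then (1:ℝ) else 0 := by
        intro k; split_ifs with h1 h2 h3 <;> simp_all
      rw [Finset.sum_congr rfl fun k _ => this k, Finset.sum_boole]
      congr 1
      congr 1
      ext k
      simp [SimpleGraph.mem_neighborFinset]
    rw [hval]
    exact_mod_cast hco i j hij
  have hMx : ∀ i, x i ≤ M := fun i => hM.2 ⟨i, rfl⟩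
  have hM0 : 0 ≤ M := by
    obtain ⟨w, hw⟩ := hM.1
    exact hw ▸ hx0 w
  have hSbound : ∑ k, (∑ i, A i k * x i ^ 2) ^ 2
      ≤ (t : ℝ) + 2 * (G.edgeFinset.card : ℝ) * M ^ 4 := by
    rw [hexp]
    have inner : ∀ i, ∑ j, (∑ k, A i k * A j k) * (x i ^ 2 * x j ^ 2)
        ≤ d i * x i ^ 4 + (t : ℝ) * x i ^ 2 := by
      intro i
      have split : ∑ j, (∑ k, A i k * A j k) * (x i ^ 2 * x j ^ 2)
          = (∑ j ∈ Finset.univ.erase i, (∑ k, A i k * A j k) * (x i ^ 2 * x j ^ 2))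
            + (∑ k, A i k * A i k) * (x i ^ 2 * x i ^ 2) :=
        (Finset.sum_erase_add Finset.univ _ (Finset.mem_univ i)).symm
      rw [split, hcdiag i]
      have h2 : ∑ j ∈ Finset.univ.erase i, (∑ k, A i k * A j k) * (x i ^ 2 * x j ^ 2)
          ≤ (t : ℝ) * x i ^ 2 := by
        calc ∑ j ∈ Finset.univ.erase i, (∑ k, A i k * A j k) * (x i ^ 2 * x j ^ 2)
            ≤ ∑ j ∈ Finset.univ.erase i, (t : ℝ) * (x i ^ 2 * x j ^ 2) := by
              refine Finset.sum_le_sum fun j hj => ?_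
              refine mul_le_mul_of_nonneg_right
                (hcoff i j (Finset.ne_of_mem_erase hj).symm) (by positivity)
        _ ≤ ∑ j, (t : ℝ) * (x i ^ 2 * x j ^ 2) := by
              refine Finset.sum_le_sum_of_subset_of_nonneg
                (Finset.erase_subset _ _) fun j _ _ => by positivity
        _ = (t : ℝ) * (x i ^ 2 * ∑ j, x j ^ 2) := by
              simp only [← Finset.mul_sum]
        _ = (t : ℝ) * x i ^ 2 := by rw [hxunit, mul_one]
      nlinarith [h2]
    calc ∑ i, ∑ j, (∑ k, A i k * A j k) * (x i ^ 2 * x j ^ 2)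
        ≤ ∑ i, (d i * x i ^ 4 + (t : ℝ) * x i ^ 2) := Finset.sum_le_sum fun i _ => inner i
    _ = (∑ i, d i * x i ^ 4) + (t : ℝ) * ∑ i, x i ^ 2 := by
          rw [Finset.sum_add_distrib, Finset.mul_sum]
    _ ≤ (∑ i, d i * M ^ 4) + (t : ℝ) * 1 := by
          rw [hxunit]
          refine add_le_add (Finset.sum_le_sum fun i _ => ?_) le_rfl
          exact mul_le_mul_of_nonneg_left (pow_le_pow_left₀ (hx0 i) (hMx i) 4) (hd0 i)
    _ = (∑ i, d i) * M ^ 4 + (t : ℝ) := by rw [← Finset.sum_mul, mul_one]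
    _ = (t : ℝ) + 2 * (G.edgeFinset.card : ℝ) * M ^ 4 := by rw [hsumd]; ring
  -- m > 0
  have hxex : ∃ i, x i ≠ 0 := by
    by_contra h
    push_neg at h
    have h0 := hxunit
    rw [Finset.sum_eq_zero (fun i _ => by rw [h i]; ring)] at h0
    norm_num at h0
  obtain ⟨i0, hi0⟩ := hxex
  have hxi0 : 0 < x i0 := lt_of_le_of_ne (hx0 i0) (Ne.symm hi0)
  have hsum0 : 0 < ∑ k, A i0 k * x k := by rw [heig i0]; exact mul_pos hlam0 hxi0
  have hke : ∃ k, A i0 k * x k ≠ 0 := by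
    by_contra h
    push_neg at h
    rw [Finset.sum_eq_zero fun k _ => h k] at hsum0
    exact lt_irrefl 0 hsum0
  obtain ⟨k0, hk0⟩ := hke
  have hadj : G.Adj i0 k0 := by
    by_contra hna
    exact hk0 (by simp [hA, hna])
  have hmpos : (0 : ℝ) < (G.edgeFinset.card : ℝ) := by
    have h1 : 0 < G.edgeFinset.card :=
      Finset.card_pos.mpr ⟨s(i0, k0), SimpleGraph.mem_edgeFinset.mpr hadj⟩
    exact_mod_cast h1
  -- finish
  set mc : ℝ := (G.edgeFinset.card : ℝ) with hmc
  have hfin : lam ^ 3 ≤ 2 * mc * ((t : ℝ) + 2 * mc * M ^ 4) := by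
    calc lam ^ 3 ≤ (∑ i, d i) * ∑ k, (∑ i, A i k * x i ^ 2) ^ 2 := hcore
    _ = 2 * mc * ∑ k, (∑ i, A i k * x i ^ 2) ^ 2 := by rw [hsumd]
    _ ≤ 2 * mc * ((t : ℝ) + 2 * mc * M ^ 4) := by
          refine mul_le_mul_of_nonneg_left hSbound (by positivity)
  have hsq3 : Real.sqrt mc ^ 3 = mc * Real.sqrt mc := by
    rw [pow_succ, Real.sq_sqrt (le_of_lt hmpos)]
  have hsqlt : Real.sqrt mc ^ 3 < lam ^ 3 :=
    pow_lt_pow_left₀ hl (Real.sqrt_nonneg _) (by norm_num)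
  have hkey : mc * Real.sqrt mc < 2 * mc * ((t : ℝ) + 2 * mc * M ^ 4) := by
    rw [← hsq3]; exact lt_of_lt_of_le hsqlt hfin
  have h2R : Real.sqrt mc < 2 * ((t : ℝ) + 2 * mc * M ^ 4) := by
    have := (mul_lt_mul_iff_right₀ hmpos).mp (by linarith [hkey] :
      mc * Real.sqrt mc < mc * (2 * ((t : ℝ) + 2 * mc * M ^ 4)))
    exact this
  linarith
end

section
/- For every ε > 0 there exists δ = δ(ε) > 0 such that: if G is a graph with m edges and λ(G) ≥ (1 + ε)·sqrt(m), then G contains a cycle C_ℓ of every length ℓ with 3 ≤ ℓ ≤ δ·sqrt(m). -/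
/-!
Let `x` be an eigenvector for `λ` and `c = ε√m`. Since `|x|` satisfies `λ|x| ≤ A|x|` entrywise,
`T = A² - cA` satisfies `λ(λ - c)|x| ≤ T|x|`, so some row sum of `T` is at least
`λ(λ - c) ≥ (1 + ε)m`. The row sum of `T` at `u` is `∑_{w ~ u} deg w - c deg u`, and
`∑_{w ~ u} deg w ≤ m + e(N(u))`; hence `e(N(u)) > c |N(u)|`. Deleting vertices of low degree
leaves a nonempty subset of `N(u)` of minimum degree at least `c ≥ ℓ`, which contains a path of
length `ℓ - 2`; joining both ends to `u` closes a cycle of length `ℓ`.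
-/

open Finset Matrix

namespace Matrix

variable {n : Type*} [Fintype n] {A : Matrix n n ℝ}

theorem mulVec_mono_of_nonneg (hA : ∀ i j, 0 ≤ A i j) {x y : n → ℝ} (hxy : x ≤ y) :
    A *ᵥ x ≤ A *ᵥ y := fun i =>
  sum_le_sum fun j _ => mul_le_mul_of_nonneg_left (hxy j) (hA i j)

theorem smul_abs_le_mulVec_abs_of_mulVec_eq (hA : ∀ i j, 0 ≤ A i j) {x : n → ℝ} {lam : ℝ}
    (h : A *ᵥ x = lam • x) : lam • |x| ≤ A *ᵥ |x| := by
  intro i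
  calc lam * |x i| ≤ |lam * x i| := by rw [abs_mul]; gcongr; exact le_abs_self lam
    _ = |∑ j, A i j * x j| := by rw [← smul_eq_mul, ← Pi.smul_apply, ← h]; rfl
    _ ≤ ∑ j, |A i j * x j| := abs_sum_le_sum_abs _ _
    _ = ∑ j, A i j * |x j| := by simp_rw [abs_mul, abs_of_nonneg (hA i _)]

theorem smul_le_sq_sub_smul_mulVec [DecidableEq n] (hA : ∀ i j, 0 ≤ A i j) {y : n → ℝ}
    {lam c : ℝ} (hy : lam • y ≤ A *ᵥ y) (hc : c ≤ lam) :
    (lam * (lam - c)) • y ≤ (A ^ 2 - c • A) *ᵥ y := by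
  have hAAy : lam • (A *ᵥ y) ≤ A *ᵥ (A *ᵥ y) := by
    simpa [mulVec_smul] using mulVec_mono_of_nonneg hA hy
  rw [sq, sub_mulVec, ← mulVec_mulVec, smul_mulVec, mul_smul]
  intro i
  have h1 := hy i
  have h2 := hAAy i
  simp only [Pi.smul_apply, Pi.sub_apply, smul_eq_mul] at h1 h2 ⊢
  nlinarith [mul_le_mul_of_nonneg_left h1 (sub_nonneg.2 hc)]

theorem exists_le_mulVec_one_of_smul_le_mulVec {T : Matrix n n ℝ} (hT : T.IsSymm) {y : n → ℝ}
    (hy : 0 ≤ y) (hy0 : y ≠ 0) {μ : ℝ} (h : μ • y ≤ T *ᵥ y) : ∃ j, μ ≤ (T *ᵥ 1) j := by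
  by_contra! hlt
  obtain ⟨j, hj⟩ : ∃ j, y j ≠ 0 := by by_contra! h0; exact hy0 (funext h0)
  have hsymm : (T *ᵥ 1) ⬝ᵥ y = 1 ⬝ᵥ (T *ᵥ y) := by
    rw [dotProduct_mulVec, ← mulVec_transpose, hT.eq]
  have hlt' : (T *ᵥ 1) ⬝ᵥ y < 1 ⬝ᵥ (μ • y) := by
    simp only [dotProduct, Pi.one_apply, one_mul, Pi.smul_apply, smul_eq_mul]
    exact sum_lt_sum (fun i _ => mul_le_mul_of_nonneg_right (hlt i).le (hy i))
      ⟨j, mem_univ j, mul_lt_mul_of_pos_right (hlt j) (lt_of_le_of_ne (hy j) (Ne.symm hj))⟩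
  have hle : 1 ⬝ᵥ (μ • y) ≤ 1 ⬝ᵥ (T *ᵥ y) :=
    sum_le_sum fun i _ => by simpa using h i
  linarith

end Matrix

namespace SimpleGraph

theorem Walk.IsPath.exists_isCycle_length_add_two {V : Type*} {G : SimpleGraph V} {a b u : V}
    {p : G.Walk a b} (hp : p.IsPath) (hlen : p.length ≠ 0) (hu : ∀ x ∈ p.support, G.Adj u x) :
    ∃ c : G.Walk u u, c.IsCycle ∧ c.length = p.length + 2 := by
  have hup : u ∉ p.support := fun h => G.loopless.irrefl u (hu u h)
  have hab : a ≠ b := by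
    rintro rfl
    exact hlen (Walk.length_eq_zero_iff.2 (Walk.isPath_iff_nil.1 hp))
  refine ⟨.cons (hu a p.start_mem_support) (p.concat (hu b p.end_mem_support).symm), ?_, by simp⟩
  rw [Walk.cons_isCycle_iff]
  refine ⟨hp.concat hup _, ?_⟩
  rw [Walk.edges_concat, List.concat_eq_append, List.mem_append, List.mem_singleton]
  rintro (h | h)
  · exact hup (p.fst_mem_support_of_mem_edges h)
  · exact hab (Sym2.congr_right.1 (h.trans Sym2.eq_swap))

variable {V : Type*} (G : SimpleGraph V) [DecidableRel G.Adj]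

theorem sum_card_adj_comm (s t : Finset V) :
    ∑ v ∈ s, #{w ∈ t | G.Adj v w} = ∑ w ∈ t, #{v ∈ s | G.Adj w v} := by
  simp only [card_filter]
  rw [sum_comm]
  simp only [G.adj_comm]

variable [DecidableEq V]

theorem sum_card_adj_erase {s : Finset V} {v : V} (hv : v ∈ s) :
    ∑ u ∈ s, #{w ∈ s | G.Adj u w}
      = ∑ u ∈ s.erase v, #{w ∈ s.erase v | G.Adj u w} + 2 * #{w ∈ s | G.Adj v w} := by
  set t := s.erase v
  have hvt : v ∉ t := notMem_erase v s
  have hrow : ∀ u ∈ t, #{w ∈ insert v t | G.Adj u w}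
      = #{w ∈ t | G.Adj u w} + if G.Adj v u then 1 else 0 := by
    intro u _
    by_cases h : G.Adj u v
    · simp [filter_insert, h, h.symm, hvt]
    · simp [filter_insert, h, mt G.adj_symm h]
  have hself : #{w ∈ insert v t | G.Adj v w} = #{w ∈ t | G.Adj v w} := by
    rw [filter_insert, if_neg (G.loopless.irrefl v)]
  rw [← insert_erase hv, sum_insert hvt, sum_congr rfl hrow, sum_add_distrib, ← card_filter, hself]
  ring

theorem exists_nonempty_forall_le_card_adj {q : ℝ} (s : Finset V)
    (hs : 2 * q * #s < ∑ v ∈ s, (#{w ∈ s | G.Adj v w} : ℝ)) :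
    ∃ t ⊆ s, t.Nonempty ∧ ∀ v ∈ t, q ≤ #{w ∈ t | G.Adj v w} := by
  induction s using Finset.strongInduction with
  | _ s ih =>
  by_cases hmin : ∀ v ∈ s, q ≤ #{w ∈ s | G.Adj v w}
  · refine ⟨s, subset_rfl, ?_, hmin⟩
    rw [nonempty_iff_ne_empty]; rintro rfl; simp at hs
  push Not at hmin
  obtain ⟨v, hv, hvq⟩ := hmin
  have hs' : 2 * q * #(s.erase v) < ∑ u ∈ s.erase v, (#{w ∈ s.erase v | G.Adj u w} : ℝ) := by
    have hsum := congrArg (Nat.cast (R := ℝ)) (G.sum_card_adj_erase hv)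
    push_cast at hsum
    have hcard : 2 * q * #s = 2 * q * #(s.erase v) + 2 * q := by
      rw [← card_erase_add_one hv]; push_cast; ring
    linarith
  obtain ⟨t, hts, ht⟩ := ih _ (erase_ssubset hv) hs'
  exact ⟨t, hts.trans (erase_subset v s), ht⟩

theorem exists_isPath_length_of_le_card_adj {s : Finset V} (hs : s.Nonempty) {j : ℕ}
    (hdeg : ∀ v ∈ s, j ≤ #{w ∈ s | G.Adj v w}) :
    ∃ (a b : V) (p : G.Walk a b), p.IsPath ∧ p.length = j ∧ ∀ x ∈ p.support, x ∈ s := by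
  induction j with
  | zero =>
    obtain ⟨a, ha⟩ := hs
    exact ⟨a, a, .nil, .nil, rfl, by simpa using ha⟩
  | succ j ih =>
    obtain ⟨a, b, p, hp, hlen, hps⟩ := ih fun v hv => (hdeg v hv).trans' j.le_succ
    have hcard : #(p.support.toFinset.erase a) < #{w ∈ s | G.Adj a w} := by
      rw [card_erase_of_mem (List.mem_toFinset.2 p.start_mem_support),
        List.toFinset_card_of_nodup hp.support_nodup, Walk.length_support, hlen]
      exact hdeg a (hps a p.start_mem_support)
    obtain ⟨w, hw, hwp⟩ := exists_mem_notMem_of_card_lt_card hcard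
    rw [mem_filter] at hw
    have hwp : w ∉ p.support := fun h =>
      hwp (mem_erase.2 ⟨hw.2.ne', List.mem_toFinset.2 h⟩)
    refine ⟨w, b, .cons hw.2.symm p, hp.cons hwp, by simp [hlen], ?_⟩
    simpa [Walk.support_cons, hw.1] using hps

variable [Fintype V]

theorem two_mul_sum_degree_le (s : Finset V) :
    2 * ∑ v ∈ s, G.degree v ≤ 2 * #G.edgeFinset + ∑ v ∈ s, #{w ∈ s | G.Adj v w} := by
  have hsplit : ∀ v, G.degree v = #{w ∈ s | G.Adj v w} + #{w ∈ sᶜ | G.Adj v w} := by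
    intro v
    rw [← card_union_of_disjoint (disjoint_filter_filter disjoint_compl_right), ← filter_union,
      union_compl, ← card_neighborFinset_eq_degree, neighborFinset_eq_filter]
  have hout : ∑ v ∈ s, #{w ∈ sᶜ | G.Adj v w} ≤ ∑ w ∈ sᶜ, G.degree w := by
    rw [sum_card_adj_comm]
    gcongr with w
    rw [← card_neighborFinset_eq_degree, neighborFinset_eq_filter]
    exact card_le_card (filter_subset_filter _ (subset_univ s))
  have htotal := G.sum_degrees_eq_twice_card_edges
  rw [← sum_add_sum_compl s] at htotal
  rw [sum_congr rfl fun v _ => hsplit v, sum_add_distrib] at htotal ⊢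
  omega

theorem sq_sub_smul_adjMatrix_mulVec_one_apply (c : ℝ) (u : V) :
    ((G.adjMatrix ℝ ^ 2 - c • G.adjMatrix ℝ) *ᵥ 1) u
      = ∑ w ∈ G.neighborFinset u, (G.degree w : ℝ) - c * G.degree u := by
  have hdeg : G.adjMatrix ℝ *ᵥ 1 = fun v => (G.degree v : ℝ) := by
    ext v; simp
  rw [sq, sub_mulVec, ← mulVec_mulVec, smul_mulVec, hdeg, Pi.sub_apply, Pi.smul_apply,
    adjMatrix_mulVec_apply, smul_eq_mul]

theorem exists_le_sum_degree_sub_of_adjMatrix_mulVec_eq {x : V → ℝ} {lam c : ℝ} (hx : x ≠ 0)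
    (h : G.adjMatrix ℝ *ᵥ x = lam • x) (hc : c ≤ lam) :
    ∃ u, lam * (lam - c) ≤ ∑ w ∈ G.neighborFinset u, (G.degree w : ℝ) - c * G.degree u := by
  have hA : ∀ i j, 0 ≤ G.adjMatrix ℝ i j := fun i j => by
    rw [adjMatrix_apply]; split_ifs <;> norm_num
  have habs : |x| ≠ 0 := fun h0 => hx (funext fun i => abs_eq_zero.1 (congrFun h0 i))
  have hT : (G.adjMatrix ℝ ^ 2 - c • G.adjMatrix ℝ).IsSymm :=
    (G.isSymm_adjMatrix.pow 2).sub (G.isSymm_adjMatrix.smul c)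
  obtain ⟨u, hu⟩ := exists_le_mulVec_one_of_smul_le_mulVec hT (abs_nonneg x) habs
    (smul_le_sq_sub_smul_mulVec hA (smul_abs_le_mulVec_abs_of_mulVec_eq hA h) hc)
  exact ⟨u, by rwa [sq_sub_smul_adjMatrix_mulVec_one_apply] at hu⟩

end SimpleGraph

/-- Graphs with `λ(G) ≥ (1+ε)√m` contain cycles of every length
`3 ≤ ℓ ≤ δ√m`. -/
theorem stmt_18 (ε : ℝ) (hε : 0 < ε) :
    ∃ δ : ℝ, 0 < δ ∧
      ∀ (V : Type) [Fintype V] [DecidableEq V] (G : SimpleGraph V)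
        [DecidableRel G.Adj] (lam : ℝ), IsSpectralRadius G lam →
        (1 + ε) * Real.sqrt (G.edgeFinset.card : ℝ) ≤ lam →
        ∀ ℓ : ℕ, 3 ≤ ℓ → (ℓ : ℝ) ≤ δ * Real.sqrt (G.edgeFinset.card : ℝ) →
          ∃ (v : V) (w : G.Walk v v), w.IsCycle ∧ w.length = ℓ := by
  refine ⟨ε, hε, fun V _ _ G _ lam hlam hbound ℓ hℓ hℓc => ?_⟩
  obtain ⟨⟨x, hx, hAx⟩, -⟩ := hlam
  set m : ℝ := (#G.edgeFinset : ℝ) with hm_def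
  set c := ε * √m
  have hsqrt : 0 < √m := by
    by_contra! h
    have : (ℓ : ℝ) ≤ 0 := hℓc.trans (mul_nonpos_of_nonneg_of_nonpos hε.le h)
    have : (3 : ℝ) ≤ ℓ := by exact_mod_cast hℓ
    linarith
  have hm : 0 < m := Real.sqrt_pos.1 hsqrt
  have hcl : c + √m ≤ lam := by linarith
  obtain ⟨u, hu⟩ := G.exists_le_sum_degree_sub_of_adjMatrix_mulVec_eq (c := c) hx hAx (by linarith)
  have hlam_sq : (1 + ε) * m ≤ lam * (lam - c) :=
    calc (1 + ε) * m = (1 + ε) * √m * √m := by rw [mul_assoc, Real.mul_self_sqrt hm.le]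
      _ ≤ lam * (lam - c) := by gcongr <;> linarith
  have hdense : 2 * c * #(G.neighborFinset u)
      < ∑ v ∈ G.neighborFinset u, (#{w ∈ G.neighborFinset u | G.Adj v w} : ℝ) := by
    have h : 2 * ∑ w ∈ G.neighborFinset u, (G.degree w : ℝ)
        ≤ 2 * m + ∑ v ∈ G.neighborFinset u, (#{w ∈ G.neighborFinset u | G.Adj v w} : ℝ) := by
      rw [hm_def]; exact_mod_cast G.two_mul_sum_degree_le (G.neighborFinset u)
    rw [G.card_neighborFinset_eq_degree]
    linarith [mul_pos hε hm]
  obtain ⟨t, htu, ht, htdeg⟩ := G.exists_nonempty_forall_le_card_adj _ hdense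
  obtain ⟨a, b, p, hp, hlen, hpt⟩ := G.exists_isPath_length_of_le_card_adj ht (j := ℓ - 2)
    fun v hv => (ℓ.sub_le 2).trans (by exact_mod_cast hℓc.trans (htdeg v hv))
  obtain ⟨cyc, hcyc, hcyc_len⟩ := hp.exists_isCycle_length_add_two (by omega)
    fun x hx => (G.mem_neighborFinset u x).1 (htu (hpt x hx))
  exact ⟨u, cyc, hcyc, by omega⟩
end
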